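/- arXiv:1711.05400 — 4 statements merged into one kernel-verified Lean document; each statement's English description precedes it below -/
import Mathlib

section
/- Let R(ξ) be an N × N polynomial matrix over ℝ[ξ] of full rank (nonzero determinant) whose behavior B = {y : ℤ≥0 → ℝ^N : R(σ)y = 0} is nonzero. Let L be the largest integer such that for every subset J ⊆ {1,…,N} of cardinality L, the N × L submatrix R_J(ξ) is left unimodular. Then the security index satisfies δ(Σ) = L + 1, where δ(Σ) := min{‖y‖ : y ∈ B, y ≠ 0}. -/
open Polynomial

/-- A signal with components indexed by `β`. -/
abbrev Signal (N : ℕ) := ℕ → Fin N → ℝ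

/-- Action of a scalar polynomial on a scalar signal via the shift operator `σ`. -/
noncomputable def polyShift (a : Polynomial ℝ) (y : ℕ → ℝ) : ℕ → ℝ :=
  fun t => a.sum fun k c => c * y (t + k)

/-- Action of a polynomial matrix on a signal via the shift operator `σ`. -/
noncomputable def matShift {α β : Type*} [Fintype β]
    (P : Matrix α β (Polynomial ℝ)) (y : ℕ → β → ℝ) : ℕ → α → ℝ :=
  fun t i => ∑ j, polyShift (P i j) (fun s => y s j) t

/-- Support of a signal: indices of components not identically zero. -/
def sigSupp {N : ℕ} (y : Signal N) : Set (Fin N) := {i | ¬ ∀ t, y t i = 0}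

/-- Weight of a signal. -/
noncomputable def wt {N : ℕ} (y : Signal N) : ℕ := (sigSupp y).ncard

/-- A polynomial matrix is left unimodular if it has a polynomial left inverse. -/
def LeftUnimodular {α β : Type*} [Fintype α] [Fintype β] [DecidableEq β]
    (P : Matrix α β (Polynomial ℝ)) : Prop :=
  ∃ G : Matrix β α (Polynomial ℝ), G * P = 1

/-- Submatrix of the columns of `R` indexed by `J`. -/
def colSub {N : ℕ} (R : Matrix (Fin N) (Fin N) (Polynomial ℝ)) (J : Finset (Fin N)) :
    Matrix (Fin N) {x // x ∈ J} (Polynomial ℝ) :=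
  R.submatrix id (fun j => (j : Fin N))

/-- Submatrix of the rows of `M` indexed by `J`. -/
def rowSub {N m : ℕ} (M : Matrix (Fin N) (Fin m) (Polynomial ℝ)) (J : Finset (Fin N)) :
    Matrix {x // x ∈ J} (Fin m) (Polynomial ℝ) :=
  M.submatrix (fun i => (i : Fin N)) id

/-- Restriction of a signal to the components indexed by `J`. -/
def sigRestrict {N : ℕ} (r : Signal N) (J : Finset (Fin N)) : ℕ → {x // x ∈ J} → ℝ :=
  fun t i => r t (i : Fin N)

/-- Security index: the minimum weight of a nonzero signal in the behavior. -/
noncomputable def secIdx {N : ℕ} (B : Set (Signal N)) : ℕ :=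
  sInf {k | ∃ y ∈ B, y ≠ 0 ∧ wt y = k}

namespace SecAux

/-- The shift operator as a linear endomorphism of scalar signals. -/
noncomputable def shiftL : (ℕ → ℝ) →ₗ[ℝ] (ℕ → ℝ) where
  toFun y := fun t => y (t + 1)
  map_add' := by intros; rfl
  map_smul' := by intros; rfl

lemma shiftL_pow (n : ℕ) (y : ℕ → ℝ) (t : ℕ) : ((shiftL ^ n) y) t = y (t + n) := by
  induction n generalizing t with
  | zero => rfl
  | succ n ih =>
      rw [pow_succ', Module.End.mul_apply]
      show ((shiftL ^ n) y) (t + 1) = _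
      rw [ih, add_assoc, add_comm 1 n]

lemma polyShift_eq (a : Polynomial ℝ) (y : ℕ → ℝ) :
    polyShift a y = (aeval shiftL a : Module.End ℝ (ℕ → ℝ)) y := by
  induction a using Polynomial.induction_on' with
  | add p q hp hq =>
      funext t
      show (p + q).sum (fun k c => c * y (t + k)) = _
      rw [Polynomial.sum_add_index p q _ (fun i => by simp) (fun a b₁ b₂ => by ring),
        map_add, LinearMap.add_apply, Pi.add_apply, ← congrFun hp t, ← congrFun hq t]
      rfl
  | monomial n c =>
      funext t
      show (monomial n c).sum (fun k c => c * y (t + k)) = _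
      rw [Polynomial.sum_monomial_index _ _ (by simp), aeval_monomial, Module.End.mul_apply,
        Module.algebraMap_end_apply]
      show c * y (t + n) = c * ((shiftL ^ n) y t)
      rw [shiftL_pow]

lemma polyShift_zero (a : Polynomial ℝ) : polyShift a (0 : ℕ → ℝ) = 0 := by
  rw [polyShift_eq]; exact map_zero _

lemma polyShift_mul (a b : Polynomial ℝ) (y : ℕ → ℝ) :
    polyShift (a * b) y = polyShift a (polyShift b y) := by
  rw [polyShift_eq, polyShift_eq, polyShift_eq, map_mul, Module.End.mul_apply]

lemma matShift_mul {α β γ : Type*} [Fintype β] [Fintype γ]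
    (A : Matrix α β (Polynomial ℝ)) (Bm : Matrix β γ (Polynomial ℝ)) (y : ℕ → γ → ℝ) :
    matShift (A * Bm) y = matShift A (matShift Bm y) := by
  funext t i
  show ∑ j, polyShift ((A * Bm) i j) (fun s => y s j) t
      = ∑ k, polyShift (A i k) (fun s => matShift Bm y s k) t
  have lhs : ∀ j, polyShift ((A * Bm) i j) (fun s => y s j) t
      = ∑ k, polyShift (A i k * Bm k j) (fun s => y s j) t := by
    intro j
    rw [polyShift_eq]
    show ((aeval shiftL) ((A * Bm) i j)) (fun s => y s j) t = _
    have : (A * Bm) i j = ∑ k, A i k * Bm k j := by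
      simp [Matrix.mul_apply]
    rw [this, map_sum, LinearMap.sum_apply, Finset.sum_apply]
    exact Finset.sum_congr rfl fun k _ => by rw [polyShift_eq]
  have rhs : ∀ k, polyShift (A i k) (fun s => matShift Bm y s k) t
      = ∑ j, polyShift (A i k * Bm k j) (fun s => y s j) t := by
    intro k
    have hfun : (fun s => matShift Bm y s k)
        = ∑ j, polyShift (Bm k j) (fun s => y s j) := by
      funext s
      show matShift Bm y s k = _
      rw [Finset.sum_apply]
      rfl
    rw [polyShift_eq, hfun, map_sum, Finset.sum_apply]
    exact Finset.sum_congr rfl fun j _ => by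
      rw [polyShift_mul, polyShift_eq, polyShift_eq]
  rw [Finset.sum_congr rfl fun j _ => lhs j, Finset.sum_congr rfl fun k _ => rhs k,
    Finset.sum_comm]

lemma matShift_one {β : Type*} [Fintype β] [DecidableEq β] (y : ℕ → β → ℝ) :
    matShift (1 : Matrix β β (Polynomial ℝ)) y = y := by
  funext t i
  show ∑ j, polyShift ((1 : Matrix β β (Polynomial ℝ)) i j) (fun s => y s j) t = y t i
  rw [Finset.sum_eq_single i]
  · rw [Matrix.one_apply_eq, polyShift_eq, map_one]; rfl
  · intro j _ hj
    rw [Matrix.one_apply_ne (Ne.symm hj), polyShift_eq, map_zero]; rfl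
  · intro h; exact absurd (Finset.mem_univ i) h

lemma matShift_zero {α β : Type*} [Fintype β] (P : Matrix α β (Polynomial ℝ)) :
    matShift P (0 : ℕ → β → ℝ) = 0 := by
  funext t i
  show ∑ j, polyShift (P i j) (fun s => (0 : ℕ → β → ℝ) s j) t = 0
  have : ∀ j : β, (fun s => (0 : ℕ → β → ℝ) s j) = (0 : ℕ → ℝ) := fun j => rfl
  simp only [this, polyShift_zero]
  simp

lemma polyShift_exp (p : Polynomial ℝ) (φ : ℂ →ₗ[ℝ] ℝ) (w lam : ℂ) (t : ℕ) :
    polyShift p (fun s => φ (w * lam ^ s)) t = φ ((aeval lam p) * w * lam ^ t) := by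
  have ha : aeval lam p = ∑ k ∈ p.support, (p.coeff k : ℂ) * lam ^ k := by
    rw [Polynomial.aeval_def, Polynomial.eval₂_eq_sum, Polynomial.sum_def]
    rfl
  show (p.sum fun k c => c * φ (w * lam ^ (t + k))) = _
  rw [Polynomial.sum_def, ha, Finset.sum_mul, Finset.sum_mul, map_sum]
  refine Finset.sum_congr rfl fun k _ => ?_
  have h1 : (p.coeff k : ℂ) * lam ^ k * w * lam ^ t
      = (p.coeff k : ℂ) * (w * lam ^ (t + k)) := by rw [pow_add]; ring
  rw [h1, ← Complex.real_smul, map_smul, smul_eq_mul]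

lemma unimod_of_minors {κ : Type*} [Fintype κ] [DecidableEq κ] {N : ℕ}
    (P : Matrix (Fin N) κ (Polynomial ℝ))
    (h : Ideal.span (Set.range fun r : κ → Fin N => (P.submatrix r id).det) = ⊤) :
    LeftUnimodular P := by
  classical
  have h1 : (1 : Polynomial ℝ) ∈ Ideal.span
      (Set.range fun r : κ → Fin N => (P.submatrix r id).det) := by
    rw [h]; trivial
  rw [Ideal.span, Submodule.mem_span_range_iff_exists_fun] at h1
  obtain ⟨c, hc⟩ := h1
  refine ⟨∑ r : κ → Fin N, c r • ((P.submatrix r id).adjugate *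
    Matrix.of (fun (a : κ) (i : Fin N) => if r a = i then (1 : Polynomial ℝ) else 0)), ?_⟩
  have sel : ∀ r : κ → Fin N,
      (Matrix.of (fun (a : κ) (i : Fin N) => if r a = i then (1 : Polynomial ℝ) else 0)) * P
      = P.submatrix r id := by
    intro r
    ext a j
    rw [Matrix.mul_apply]
    simp only [Matrix.of_apply, ite_mul, one_mul, zero_mul]
    rw [Finset.sum_ite_eq Finset.univ (r a) (fun i => P i j)]
    simp [Matrix.submatrix_apply]
  rw [Matrix.sum_mul]
  calc (∑ r : κ → Fin N, c r • ((P.submatrix r id).adjugate *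
        Matrix.of (fun (a : κ) (i : Fin N) => if r a = i then (1 : Polynomial ℝ) else 0)) * P)
      = ∑ r : κ → Fin N, c r • ((P.submatrix r id).det • (1 : Matrix κ κ (Polynomial ℝ))) := by
        refine Finset.sum_congr rfl fun r _ => ?_
        rw [Matrix.smul_mul, Matrix.mul_assoc, sel r, Matrix.adjugate_mul]
    _ = (∑ r : κ → Fin N, c r • (P.submatrix r id).det) • (1 : Matrix κ κ (Polynomial ℝ)) := by
        rw [Finset.sum_smul]
        exact Finset.sum_congr rfl fun r _ => by rw [smul_smul, smul_eq_mul]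
    _ = 1 := by rw [hc, one_smul]

lemma ideal_has_root {I : Ideal (Polynomial ℝ)} (h : I ≠ ⊤) :
    ∃ z : ℂ, ∀ p ∈ I, aeval z p = 0 := by
  obtain ⟨m, hm, hIm⟩ := Ideal.exists_le_maximal I h
  obtain ⟨g, hg⟩ := (IsPrincipalIdealRing.principal m)
  have hgu : ¬ IsUnit g := by
    intro hu
    exact hm.ne_top (by rw [hg, Ideal.submodule_span_eq, Ideal.span_singleton_eq_top]; exact hu)
  have hg0 : g ≠ 0 := by
    rintro rfl
    have hbot : m = ⊥ := by rw [hg, Ideal.submodule_span_eq, Ideal.span_singleton_eq_bot]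
    have hXne : Ideal.span {(X : Polynomial ℝ)} ≠ ⊤ := by
      rw [Ne, Ideal.span_singleton_eq_top]; exact Polynomial.not_isUnit_X
    have heq := hm.eq_of_le hXne (hbot ▸ bot_le)
    have hX0 : (X : Polynomial ℝ) = 0 := by
      rw [← Ideal.span_singleton_eq_bot, ← heq, hbot]
    exact Polynomial.X_ne_zero hX0
  have hdeg : 0 < (g.map (algebraMap ℝ ℂ)).degree := by
    rw [Polynomial.degree_map]
    exact Polynomial.degree_pos_of_ne_zero_of_nonunit hg0 hgu
  obtain ⟨z, hz⟩ := Complex.exists_root hdeg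
  refine ⟨z, fun p hp => ?_⟩
  have hpm : p ∈ m := hIm hp
  rw [hg, Ideal.submodule_span_eq, Ideal.mem_span_singleton'] at hpm
  obtain ⟨a, rfl⟩ := hpm
  have hgz : aeval z g = 0 := by
    rw [Polynomial.aeval_def, ← Polynomial.eval_map]
    exact hz
  rw [map_mul, hgz, mul_zero]

section
open Matrix
lemma exists_kernel_vector {κ : Type*} [Fintype κ] [DecidableEq κ] {N : ℕ}
    (Pc : Matrix (Fin N) κ ℂ)
    (h : ∀ r : κ → Fin N, (Pc.submatrix r id).det = 0) :
    ∃ v : κ → ℂ, v ≠ 0 ∧ Pc.mulVec v = 0 := by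
  by_contra hcon
  push_neg at hcon
  have hinj : Function.Injective Pc.mulVecLin := by
    rw [← LinearMap.ker_eq_bot]
    rw [LinearMap.ker_eq_bot']
    intro v hv
    by_contra hv0
    exact (hcon v hv0) hv
  have hrk : Pc.rank = Fintype.card κ := by
    rw [Matrix.rank, LinearMap.finrank_range_of_inj hinj]
    simp [Module.finrank_pi]
  have hrkT : Pcᵀ.rank = Fintype.card κ := by rw [Matrix.rank_transpose]; exact hrk
  have hrange : LinearMap.range Pcᵀ.mulVecLin = ⊤ := by
    apply Submodule.eq_top_of_finrank_eq
    rw [← Matrix.rank]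
    rw [hrkT]
    simp [Module.finrank_pi]
  have hspan : Submodule.span ℂ (Set.range fun i : Fin N => (Pc i : κ → ℂ)) = ⊤ := by
    rw [eq_top_iff, ← hrange]
    rintro x ⟨w, rfl⟩
    have : Pcᵀ.mulVecLin w = ∑ i, w i • Pc i := by
      funext j
      simp only [Matrix.mulVecLin_apply, Matrix.mulVec, dotProduct,
        Matrix.transpose_apply, Finset.sum_apply, Pi.smul_apply, smul_eq_mul]
      exact Finset.sum_congr rfl fun i _ => mul_comm _ _
    rw [this]
    exact Submodule.sum_mem _ fun i _ =>
      Submodule.smul_mem _ _ (Submodule.subset_span ⟨i, rfl⟩)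
  obtain ⟨b, hbsub, hbspan, hbli⟩ :=
    exists_linearIndependent ℂ (Set.range fun i : Fin N => (Pc i : κ → ℂ))
  rw [hspan] at hbspan
  let bas : Module.Basis b ℂ (κ → ℂ) := Module.Basis.mk hbli (by rw [Subtype.range_coe, hbspan])
  haveI : Fintype b := FiniteDimensional.fintypeBasisIndex bas
  have hcard : Fintype.card b = Fintype.card κ := by
    have := Module.finrank_eq_card_basis bas
    rw [Module.finrank_pi] at this
    omega
  let e : κ ≃ b := (Fintype.equivOfCardEq hcard.symm)
  have hchoice : ∀ a : κ, ∃ i : Fin N, Pc i = ((e a : b) : κ → ℂ) := by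
    intro a
    obtain ⟨i, hi⟩ := hbsub (e a).2
    exact ⟨i, hi⟩
  choose r hr using hchoice
  have hli : LinearIndependent ℂ fun a : κ => ((e a : b) : κ → ℂ) := by
    have := bas.linearIndependent
    have h2 := this.comp e e.injective
    convert h2 using 2
    simp [bas, Module.Basis.mk_apply]
  have hdet0 := h r
  rw [← Matrix.exists_vecMul_eq_zero_iff] at hdet0
  obtain ⟨w, hw0, hw⟩ := hdet0
  have : ∑ a, w a • ((e a : b) : κ → ℂ) = 0 := by
    funext j
    have := congrFun hw j
    simp only [Matrix.vecMul, dotProduct, Matrix.submatrix_apply, id] at this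
    simp only [Pi.zero_apply] at this
    simp only [Finset.sum_apply, Pi.smul_apply, smul_eq_mul, Pi.zero_apply]
    rw [← this]
    exact Finset.sum_congr rfl fun a _ => by rw [← hr a]
  have := linearIndependent_iff'.mp hli Finset.univ w (by simpa using this)
  exact hw0 (funext fun a => this a (Finset.mem_univ a))
end

end SecAux

/-- computation of the security index: `δ(Σ) = L + 1` where `L` is
the largest integer such that every `N × L` column submatrix of `R` is left
unimodular. -/
theorem security_index_eq_L_add_one {N : ℕ}
    (R : Matrix (Fin N) (Fin N) (Polynomial ℝ)) (hdet : R.det ≠ 0)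
    (B : Set (Signal N)) (hB : B = {y | matShift R y = 0})
    (hBne : ∃ y ∈ B, y ≠ 0)
    (L : ℕ)
    (hL : ∀ J : Finset (Fin N), J.card = L → LeftUnimodular (colSub R J))
    (hLmax : ¬ ∀ J : Finset (Fin N), J.card = L + 1 → LeftUnimodular (colSub R J)) :
    secIdx B = L + 1 := by
  classical
  push_neg at hLmax
  obtain ⟨J, hJcard, hJnu⟩ := hLmax
  have hLN : L + 1 ≤ N := by
    have := Finset.card_le_univ J
    simpa [hJcard] using this
  -- Part (a): every nonzero element of the behavior has weight at least L + 1.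
  have lower : ∀ y, y ∈ B → y ≠ 0 → L + 1 ≤ wt y := by
    intro y hyB hy0
    by_contra hlt
    push_neg at hlt
    have hfin : (sigSupp y).Finite := Set.toFinite _
    have hcardle : hfin.toFinset.card ≤ L := by
      rw [← Set.ncard_eq_toFinset_card _ hfin]
      exact Nat.lt_succ_iff.mp hlt
    obtain ⟨J', hsub, hJ'card⟩ := Finset.exists_superset_card_eq hcardle
      (by simpa using (by omega : L ≤ N))
    obtain ⟨G, hG⟩ := hL J' hJ'card
    have hoff : ∀ j : Fin N, j ∉ J' → ∀ t, y t j = 0 := by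
      intro j hj t
      by_contra h0
      have hjs : j ∈ sigSupp y := fun hall => h0 (hall t)
      exact hj (hsub (hfin.mem_toFinset.mpr hjs))
    have hPz : matShift (colSub R J') (sigRestrict y J') = 0 := by
      funext t i
      have hy : matShift R y t i = 0 := by
        have hB' : matShift R y = 0 := by rw [hB] at hyB; exact hyB
        rw [hB']; rfl
      show matShift (colSub R J') (sigRestrict y J') t i = (0 : ℝ)
      rw [← hy]
      show ∑ j : {x // x ∈ J'}, polyShift (R i (↑j)) (fun s => y s (↑j)) t
          = ∑ j : Fin N, polyShift (R i j) (fun s => y s j) t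
      rw [Finset.sum_coe_sort J' (fun j => polyShift (R i j) (fun s => y s j) t)]
      refine Finset.sum_subset (Finset.subset_univ J') ?_
      intro j _ hj
      have hzero : (fun s => y s j) = (0 : ℕ → ℝ) := funext fun s => hoff j hj s
      rw [hzero, SecAux.polyShift_zero]
      rfl
    have hrz : sigRestrict y J' = 0 := by
      calc sigRestrict y J' = matShift 1 (sigRestrict y J') := (SecAux.matShift_one _).symm
        _ = matShift (G * colSub R J') (sigRestrict y J') := by rw [hG]
        _ = matShift G (matShift (colSub R J') (sigRestrict y J')) := SecAux.matShift_mul _ _ _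
        _ = matShift G 0 := by rw [hPz]
        _ = 0 := SecAux.matShift_zero G
    apply hy0
    funext t i
    by_cases hi : i ∈ J'
    · exact congrFun (congrFun hrz t) ⟨i, hi⟩
    · exact hoff i hi t
  -- Part (b): construct a nonzero behavior element supported on J.
  set P : Matrix (Fin N) {x // x ∈ J} (Polynomial ℝ) := colSub R J with hPdef
  have hspanne : Ideal.span
      (Set.range fun r : {x // x ∈ J} → Fin N => (P.submatrix r id).det) ≠ ⊤ := by
    intro htop
    exact hJnu (SecAux.unimod_of_minors P htop)
  obtain ⟨z, hz⟩ := SecAux.ideal_has_root hspanne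
  set φR : Polynomial ℝ →+* ℂ := (aeval z : Polynomial ℝ →ₐ[ℝ] ℂ).toRingHom with hφR
  set Pc : Matrix (Fin N) {x // x ∈ J} ℂ := P.map φR with hPc
  have hminors : ∀ r : {x // x ∈ J} → Fin N, (Pc.submatrix r id).det = 0 := by
    intro r
    have h1 : (Pc.submatrix r id) = φR.mapMatrix (P.submatrix r id) := rfl
    rw [h1, ← RingHom.map_det]
    exact hz _ (Ideal.subset_span ⟨r, rfl⟩)
  obtain ⟨v, hv0, hvker⟩ := SecAux.exists_kernel_vector Pc hminors
  -- candidate signals: real and imaginary parts of the exponential solution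
  have hmem : ∀ φ : ℂ →ₗ[ℝ] ℝ,
      (fun t i => if h : i ∈ J then φ (v ⟨i, h⟩ * z ^ t) else 0 : Signal N) ∈ B := by
    intro φ
    rw [hB]
    show matShift R _ = 0
    funext t i
    show (∑ j : Fin N, polyShift (R i j)
      (fun s => if h : j ∈ J then φ (v ⟨j, h⟩ * z ^ s) else 0) t) = 0
    have hstep : (∑ j : Fin N, polyShift (R i j)
        (fun s => if h : j ∈ J then φ (v ⟨j, h⟩ * z ^ s) else 0) t)
        = ∑ j ∈ J, polyShift (R i j)
          (fun s => if h : j ∈ J then φ (v ⟨j, h⟩ * z ^ s) else 0) t := by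
      symm
      refine Finset.sum_subset (Finset.subset_univ J) ?_
      intro j _ hj
      have hzero : (fun s => if h : j ∈ J then φ (v ⟨j, h⟩ * z ^ s) else 0) = (0 : ℕ → ℝ) :=
        funext fun s => by rw [dif_neg hj]; rfl
      rw [hzero, SecAux.polyShift_zero]
      rfl
    rw [hstep, ← Finset.sum_coe_sort J (fun j => polyShift (R i j)
      (fun s => if h : j ∈ J then φ (v ⟨j, h⟩ * z ^ s) else 0) t)]
    have hterm : ∀ j : {x // x ∈ J}, polyShift (R i (↑j))
        (fun s => if h : (↑j : Fin N) ∈ J then φ (v ⟨↑j, h⟩ * z ^ s) else 0) t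
        = φ (Pc i j * v j * z ^ t) := by
      intro j
      have harg : (fun s => if h : (↑j : Fin N) ∈ J then φ (v ⟨↑j, h⟩ * z ^ s) else 0)
          = fun s => φ (v j * z ^ s) := by
        funext s
        rw [dif_pos j.2]
      rw [harg, SecAux.polyShift_exp]
      have : aeval z (R i (↑j : Fin N)) = Pc i j := rfl
      rw [this]
    rw [Finset.sum_congr rfl fun j _ => hterm j, ← map_sum]
    have hker : (∑ j : {x // x ∈ J}, Pc i j * v j * z ^ t) = 0 := by
      rw [← Finset.sum_mul]
      have h0 : (∑ j : {x // x ∈ J}, Pc i j * v j) = 0 := by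
        have := congrFun hvker i
        simpa [Matrix.mulVec, dotProduct] using this
      rw [h0, zero_mul]
    rw [hker, map_zero]
  have hoffJ : ∀ φ : ℂ →ₗ[ℝ] ℝ,
      sigSupp (fun t i => if h : i ∈ J then φ (v ⟨i, h⟩ * z ^ t) else 0 : Signal N) ⊆ ↑J := by
    intro φ i hi
    by_contra hiJ
    have hiJ' : i ∉ J := fun hm => hiJ (Finset.mem_coe.mpr hm)
    exact hi fun t => by
      show (if h : i ∈ J then φ (v ⟨i, h⟩ * z ^ t) else 0) = 0
      rw [dif_neg hiJ']
  have hone : ∃ y, y ∈ B ∧ y ≠ 0 ∧ sigSupp y ⊆ ↑J := by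
    obtain ⟨j0, hj0⟩ : ∃ j0, v j0 ≠ 0 := by
      by_contra hfa; push_neg at hfa; exact hv0 (funext hfa)
    by_cases hre :
      (fun t i => if h : i ∈ J then Complex.reLm (v ⟨i, h⟩ * z ^ t) else 0 : Signal N) = 0
    · refine ⟨_, hmem Complex.imLm, ?_, hoffJ Complex.imLm⟩
      intro h0
      apply hj0
      have h1 := congrFun (congrFun hre 0) ↑j0
      have h2 := congrFun (congrFun h0 0) ↑j0
      rw [dif_pos j0.2] at h1 h2
      simp only [pow_zero, mul_one, Subtype.coe_eta] at h1 h2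
      have hzero : (0 : Signal N) 0 (↑j0 : Fin N) = 0 := rfl
      rw [hzero] at h1 h2
      exact Complex.ext h1 h2
    · exact ⟨_, hmem Complex.reLm, hre, hoffJ Complex.reLm⟩
  obtain ⟨y, hyB, hy0, hysupp⟩ := hone
  have hwle : wt y ≤ L + 1 := by
    have := Set.ncard_le_ncard hysupp (J.finite_toSet)
    rwa [Set.ncard_coe_finset, hJcard] at this
  have hw : wt y = L + 1 := le_antisymm hwle (lower y hyB hy0)
  apply le_antisymm
  · exact Nat.sInf_le ⟨y, hyB, hy0, hw⟩
  · refine le_csInf ⟨L + 1, y, hyB, hy0, hw⟩ ?_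
    rintro k ⟨u, huB, hu0, rfl⟩
    exact lower u huB hu0
end

section
/- Let R(ξ) be an N × N polynomial matrix over ℝ[ξ] of full rank with nonzero behavior B = {y : ℤ≥0 → ℝ^N : R(σ)y = 0}. Then the system is maximally secure, i.e., its security index δ(Σ) := min{‖y‖ : 0 ≠ y ∈ B} equals N, if and only if every N × (N−1) submatrix of R(ξ) obtained by deleting one column is left unimodular. -/
open Polynomial

lemma polyShift_add (a b : Polynomial ℝ) (y : ℕ → ℝ) :
    polyShift (a + b) y = fun t => polyShift a y t + polyShift b y t := by
  funext t
  exact Polynomial.sum_add_index a b _ (fun k => zero_mul _) (fun k c d => add_mul c d _)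

lemma polyShift_monomial (k : ℕ) (c : ℝ) (y : ℕ → ℝ) :
    polyShift (monomial k c) y = fun t => c * y (t + k) := by
  funext t
  exact Polynomial.sum_monomial_index c _ (zero_mul _)

lemma polyShift_zero_left (y : ℕ → ℝ) : polyShift 0 y = fun _ => 0 := by
  funext t; exact Polynomial.sum_zero_index _

lemma polyShift_one (y : ℕ → ℝ) : polyShift 1 y = y := by
  rw [← Polynomial.monomial_zero_one, polyShift_monomial]
  funext t; simp

lemma polyShift_mul (a b : Polynomial ℝ) (y : ℕ → ℝ) :
    polyShift (a * b) y = polyShift a (polyShift b y) := by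
  induction a using Polynomial.induction_on' with
  | add p q hp hq =>
      rw [add_mul, polyShift_add, hp, hq, polyShift_add]
  | monomial k c =>
      induction b using Polynomial.induction_on' with
      | add p q hp hq =>
          rw [mul_add, polyShift_add, hp, hq, polyShift_add, polyShift_monomial]
          funext t
          simp [polyShift_monomial, mul_add]
      | monomial l d =>
          rw [Polynomial.monomial_mul_monomial, polyShift_monomial, polyShift_monomial,
            polyShift_monomial]
          funext t
          rw [← add_assoc]
          ring

lemma polyShift_zero_sig (a : Polynomial ℝ) : polyShift a (fun _ => 0) = fun _ => 0 := by
  funext t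
  simp [polyShift, Polynomial.sum_def]

lemma polyShift_sigSum (a : Polynomial ℝ) {ι : Type*} (F : Finset ι) (f : ι → ℕ → ℝ) :
    polyShift a (fun s => ∑ j ∈ F, f j s) = fun t => ∑ j ∈ F, polyShift a (f j) t := by
  funext t
  simp only [polyShift, Polynomial.sum_def, Finset.mul_sum]
  rw [Finset.sum_comm]

lemma polyShift_polySum {ι : Type*} (F : Finset ι) (p : ι → Polynomial ℝ) (y : ℕ → ℝ) :
    polyShift (∑ j ∈ F, p j) y = fun t => ∑ j ∈ F, polyShift (p j) y t := by
  classical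
  induction F using Finset.induction_on with
  | empty => simpa using polyShift_zero_left y
  | insert _ _ hx ih =>
      rw [Finset.sum_insert hx, polyShift_add, ih]
      funext t
      rw [Finset.sum_insert hx]

lemma matShift_mul {α β γ : Type*} [Fintype β] [Fintype γ]
    (M : Matrix α β (Polynomial ℝ)) (P : Matrix β γ (Polynomial ℝ)) (y : ℕ → γ → ℝ) :
    matShift (M * P) y = matShift M (matShift P y) := by
  funext t i
  show ∑ k, polyShift ((M * P) i k) (fun s => y s k) t
      = ∑ j, polyShift (M i j) (fun s => matShift P y s j) t
  have lhs : ∀ k, polyShift ((M * P) i k) (fun s => y s k) t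
      = ∑ j, polyShift (M i j) (polyShift (P j k) (fun s => y s k)) t := by
    intro k
    rw [Matrix.mul_apply, polyShift_polySum]
    refine Finset.sum_congr rfl fun j _ => ?_
    rw [polyShift_mul]
  have rhs : ∀ j, polyShift (M i j) (fun s => matShift P y s j) t
      = ∑ k, polyShift (M i j) (polyShift (P j k) (fun s => y s k)) t := by
    intro j
    rw [show (fun s => matShift P y s j)
        = fun s => ∑ k, polyShift (P j k) (fun s' => y s' k) s from rfl,
      polyShift_sigSum]
  simp only [lhs, rhs]
  exact Finset.sum_comm

lemma matShift_one {α : Type*} [Fintype α] [DecidableEq α] (y : ℕ → α → ℝ) :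
    matShift (1 : Matrix α α (Polynomial ℝ)) y = y := by
  funext t i
  show ∑ j, polyShift ((1 : Matrix α α (Polynomial ℝ)) i j) (fun s => y s j) t = y t i
  rw [Finset.sum_eq_single i]
  · rw [Matrix.one_apply_eq, polyShift_one]
  · intro j _ hj
    rw [Matrix.one_apply_ne (Ne.symm hj), polyShift_zero_left]
  · intro h; exact absurd (Finset.mem_univ i) h

lemma matShift_zero_sig {α β : Type*} [Fintype β] (P : Matrix α β (Polynomial ℝ)) :
    matShift P (0 : ℕ → β → ℝ) = 0 := by
  funext t i
  show ∑ j, polyShift (P i j) (fun s => (0 : ℕ → β → ℝ) s j) t = 0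
  refine Finset.sum_eq_zero fun j _ => ?_
  have : (fun s => (0 : ℕ → β → ℝ) s j) = fun _ => (0:ℝ) := rfl
  rw [this, polyShift_zero_sig]

/-- The delete-one-row square minor of an `(n+1) × n` matrix. -/
noncomputable def minor {n : ℕ} {R : Type*} [CommRing R] (P : Matrix (Fin (n+1)) (Fin n) R)
    (r : Fin (n+1)) : R :=
  Matrix.det (P.submatrix r.succAbove id)

lemma leftUnimodular_of_span_minors {n : ℕ} (P : Matrix (Fin (n+1)) (Fin n) (Polynomial ℝ))
    (h : Ideal.span (Set.range (minor P)) = ⊤) : LeftUnimodular P := by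
  classical
  obtain ⟨c, hc⟩ := Ideal.mem_span_range_iff_exists_fun.mp (h ▸ Submodule.mem_top :
    (1 : Polynomial ℝ) ∈ Ideal.span (Set.range (minor P)))
  set Q : Fin (n+1) → Matrix (Fin n) (Fin n) (Polynomial ℝ) :=
    fun r => P.submatrix r.succAbove id with hQ
  set sel : Fin (n+1) → Matrix (Fin n) (Fin (n+1)) (Polynomial ℝ) :=
    fun r a b => if b = r.succAbove a then 1 else 0 with hsel
  have hselP : ∀ r, sel r * P = Q r := by
    intro r
    ext a b
    rw [Matrix.mul_apply]
    simp [hsel, hQ, Matrix.submatrix_apply]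
  refine ⟨∑ r, c r • ((Q r).adjugate * sel r), ?_⟩
  rw [Matrix.sum_mul]
  have : ∀ r : Fin (n+1), (c r • ((Q r).adjugate * sel r)) * P = (c r * minor P r) • 1 := by
    intro r
    rw [Matrix.smul_mul, Matrix.mul_assoc, hselP, Matrix.adjugate_mul, smul_smul]
    rfl
  simp only [this]
  rw [← Finset.sum_smul, hc, one_smul]

lemma exists_common_root {n : ℕ} (m : Fin (n+1) → Polynomial ℝ)
    (h : Ideal.span (Set.range m) ≠ ⊤) :
    ∃ z : ℂ, ∀ r, aeval z (m r) = 0 := by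
  classical
  set I := Ideal.span (Set.range m) with hI
  obtain ⟨g, hg⟩ : Submodule.IsPrincipal I := inferInstance
  have hdvd : ∀ r, g ∣ m r := by
    intro r
    have : m r ∈ I := Ideal.subset_span (Set.mem_range_self r)
    rw [hg] at this
    exact (Ideal.mem_span_singleton).mp this
  have hgu : ¬ IsUnit g := by
    intro hu
    exact h (hg.trans (Ideal.span_singleton_eq_top.mpr hu))
  by_cases hg0 : g = 0
  · refine ⟨0, fun r => ?_⟩
    obtain ⟨q, hq⟩ := hdvd r
    rw [hq, hg0, zero_mul, map_zero]
  · have hdeg : 0 < g.degree := by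
      rcases lt_or_eq_of_le (Polynomial.zero_le_degree_iff.mpr hg0) with h' | h'
      · exact h'
      · exact absurd (Polynomial.isUnit_iff_degree_eq_zero.mpr h'.symm) hgu
    have hdegC : 0 < (g.map (algebraMap ℝ ℂ)).degree := by
      rwa [Polynomial.degree_map_eq_of_injective (algebraMap ℝ ℂ).injective]
    obtain ⟨z, hz⟩ := Complex.exists_root hdegC
    refine ⟨z, fun r => ?_⟩
    obtain ⟨q, hq⟩ := hdvd r
    have hgz : aeval z g = 0 := by
      rw [Polynomial.aeval_def, ← Polynomial.eval_map]
      exact hz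
    rw [hq, map_mul, hgz, zero_mul]

lemma exists_kernel_vector {n : ℕ} (A : Matrix (Fin (n+1)) (Fin n) ℂ)
    (h : ∀ r, minor A r = 0) :
    ∃ v : Fin n → ℂ, v ≠ 0 ∧ A.mulVec v = 0 := by
  classical
  by_contra hcon
  push_neg at hcon
  -- columns of A
  set cols : Fin n → (Fin (n+1) → ℂ) := fun c a => A a c with hcols
  have hspan : Submodule.span ℂ (Set.range cols) ≠ ⊤ := by
    intro htop
    have h1 : (Module.finrank ℂ (Fin (n+1) → ℂ))
        ≤ Fintype.card (Fin n) := by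
      rw [show Module.finrank ℂ (Fin (n+1) → ℂ)
          = Module.finrank ℂ (Submodule.span ℂ (Set.range cols)) by
        rw [htop]; exact (finrank_top ℂ _).symm]
      exact finrank_range_le_card cols
    simp [Module.finrank_fintype_fun_eq_card] at h1
  obtain ⟨w, hw⟩ : ∃ w, w ∉ Submodule.span ℂ (Set.range cols) := by
    by_contra hall
    push_neg at hall
    exact hspan (Submodule.eq_top_iff'.mpr hall)
  -- extended square matrix
  set Aw : Matrix (Fin (n+1)) (Fin (n+1)) ℂ :=
    fun a => Fin.cases (w a) (fun c => A a c) with hAw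
  have hdet : Aw.det = 0 := by
    rw [Matrix.det_succ_column_zero]
    refine Finset.sum_eq_zero fun r _ => ?_
    have : (Aw.submatrix r.succAbove Fin.succ) = A.submatrix r.succAbove id := by
      ext a b; rfl
    rw [this]
    have := h r
    rw [minor] at this
    rw [this, mul_zero]
  obtain ⟨u, hu0, huk⟩ := Matrix.exists_mulVec_eq_zero_iff.mpr hdet
  have hsplit : ∀ a, w a * u 0 + A.mulVec (fun c => u c.succ) a = 0 := by
    intro a
    have := congrFun huk a
    rw [Matrix.mulVec, dotProduct, Fin.sum_univ_succ] at this
    simpa [hAw, Matrix.mulVec, dotProduct, mul_comm] using this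
  by_cases hu00 : u 0 = 0
  · have hker : A.mulVec (fun c => u c.succ) = 0 := by
      funext a
      have := hsplit a
      rwa [hu00, mul_zero, zero_add] at this
    have hne : (fun c => u c.succ : Fin n → ℂ) ≠ 0 := by
      intro h0
      apply hu0
      funext b
      refine Fin.cases ?_ (fun c => ?_) b
      · exact hu00
      · exact congrFun h0 c
    exact hcon _ hne hker
  · apply hw
    have hwexp : w = (-(u 0)⁻¹) • ∑ c, u c.succ • cols c := by
      funext a
      have hs := hsplit a
      have hmv : A.mulVec (fun c => u c.succ) a = ∑ c, u c.succ * cols c a := by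
        rw [Matrix.mulVec, dotProduct]
        exact Finset.sum_congr rfl fun c _ => mul_comm _ _
      have : w a = -(u 0)⁻¹ * ∑ c, u c.succ * cols c a := by
        rw [← hmv]
        field_simp
        linear_combination hs
      rw [this]
      simp [Finset.mul_sum]
    rw [hwexp]
    refine Submodule.smul_mem _ _ (Submodule.sum_mem _ fun c _ => ?_)
    exact Submodule.smul_mem _ _ (Submodule.subset_span (Set.mem_range_self c))

lemma polyShift_re (a : Polynomial ℝ) (z : ℂ) (f : ℕ → ℂ) (t : ℕ)
    (hf : ∀ s, f s = z ^ s * f 0) :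
    polyShift a (fun s => (f s).re) t = ((aeval z a) * f t).re := by
  rw [polyShift, Polynomial.sum_def]
  have : ∀ k ∈ a.support, a.coeff k * (f (t + k)).re = ((a.coeff k : ℂ) * z ^ k * f t).re := by
    intro k _
    rw [hf (t + k), hf t]
    rw [show ((a.coeff k : ℂ) * z ^ k * (z ^ t * f 0)) = (a.coeff k : ℂ) * (z ^ (t + k) * f 0) by
      rw [pow_add]; ring]
    rw [Complex.re_ofReal_mul]
  rw [Finset.sum_congr rfl this, ← Complex.re_sum]
  congr 1
  rw [Polynomial.aeval_def, Polynomial.eval₂_eq_sum, Polynomial.sum_def, Finset.sum_mul]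
  refine Finset.sum_congr rfl fun k _ => ?_
  simp [Algebra.smul_def]

lemma polyShift_im (a : Polynomial ℝ) (z : ℂ) (f : ℕ → ℂ) (t : ℕ)
    (hf : ∀ s, f s = z ^ s * f 0) :
    polyShift a (fun s => (f s).im) t = ((aeval z a) * f t).im := by
  rw [polyShift, Polynomial.sum_def]
  have : ∀ k ∈ a.support, a.coeff k * (f (t + k)).im = ((a.coeff k : ℂ) * z ^ k * f t).im := by
    intro k _
    rw [hf (t + k), hf t]
    rw [show ((a.coeff k : ℂ) * z ^ k * (z ^ t * f 0)) = (a.coeff k : ℂ) * (z ^ (t + k) * f 0) by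
      rw [pow_add]; ring]
    rw [Complex.im_ofReal_mul]
  rw [Finset.sum_congr rfl this, ← Complex.im_sum]
  congr 1
  rw [Polynomial.aeval_def, Polynomial.eval₂_eq_sum, Polynomial.sum_def, Finset.sum_mul]
  refine Finset.sum_congr rfl fun k _ => ?_
  simp [Algebra.smul_def]

lemma core_exists_solution {n : ℕ} (P : Matrix (Fin (n+1)) (Fin n) (Polynomial ℝ))
    (hP : ¬ LeftUnimodular P) :
    ∃ v : ℕ → Fin n → ℝ, v ≠ 0 ∧ matShift P v = 0 := by
  classical
  have hspan : Ideal.span (Set.range (minor P)) ≠ ⊤ :=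
    fun h => hP (leftUnimodular_of_span_minors P h)
  obtain ⟨z, hz⟩ := exists_common_root (minor P) hspan
  -- the complex matrix P(z)
  set A : Matrix (Fin (n+1)) (Fin n) ℂ := P.map (aeval z) with hA
  have hminors : ∀ r, minor A r = 0 := by
    intro r
    have h1 := AlgHom.map_det (aeval z) (P.submatrix r.succAbove id)
    rw [AlgHom.mapMatrix_apply] at h1
    rw [minor, show A.submatrix r.succAbove id = (P.submatrix r.succAbove id).map (aeval z)
      from rfl, ← h1]
    exact hz r
  obtain ⟨v, hv0, hvk⟩ := exists_kernel_vector A hminors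
  -- complex exponential solution
  set zs : ℕ → Fin n → ℂ := fun t j => z ^ t * v j with hzs
  have hker : ∀ t a, z ^ t * ∑ j, aeval z (P a j) * v j = 0 := by
    intro t a
    have := congrFun hvk a
    rw [Matrix.mulVec, dotProduct, Pi.zero_apply] at this
    rw [show (∑ j, aeval z (P a j) * v j) = ∑ j, A a j * v j from rfl, this, mul_zero]
  have hRe : matShift P (fun t j => (zs t j).re) = 0 := by
    funext t a
    show ∑ j, polyShift (P a j) (fun s => (zs s j).re) t = 0
    have : ∀ j ∈ Finset.univ, polyShift (P a j) (fun s => (zs s j).re) t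
        = ((aeval z (P a j)) * zs t j).re := by
      intro j _
      exact polyShift_re _ z (fun s => zs s j) t (fun s => by simp [hzs])
    rw [Finset.sum_congr rfl this, ← Complex.re_sum]
    have : (∑ j, aeval z (P a j) * zs t j) = z ^ t * ∑ j, aeval z (P a j) * v j := by
      rw [Finset.mul_sum]
      refine Finset.sum_congr rfl fun j _ => ?_
      rw [hzs]; ring
    rw [this, hker t a, Complex.zero_re]
  have hIm : matShift P (fun t j => (zs t j).im) = 0 := by
    funext t a
    show ∑ j, polyShift (P a j) (fun s => (zs s j).im) t = 0
    have : ∀ j ∈ Finset.univ, polyShift (P a j) (fun s => (zs s j).im) t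
        = ((aeval z (P a j)) * zs t j).im := by
      intro j _
      exact polyShift_im _ z (fun s => zs s j) t (fun s => by simp [hzs])
    rw [Finset.sum_congr rfl this, ← Complex.im_sum]
    have : (∑ j, aeval z (P a j) * zs t j) = z ^ t * ∑ j, aeval z (P a j) * v j := by
      rw [Finset.mul_sum]
      refine Finset.sum_congr rfl fun j _ => ?_
      rw [hzs]; ring
    rw [this, hker t a, Complex.zero_im]
  obtain ⟨j0, hj0⟩ : ∃ j, v j ≠ 0 := by
    by_contra hall
    push_neg at hall
    exact hv0 (funext hall)
  by_cases hre : (fun t j => (zs t j).re) = (0 : ℕ → Fin n → ℝ)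
  · refine ⟨fun t j => (zs t j).im, ?_, hIm⟩
    intro h0
    apply hj0
    have h1 : (v j0).re = 0 := by
      have := congrFun (congrFun hre 0) j0
      simpa [hzs] using this
    have h2 : (v j0).im = 0 := by
      have := congrFun (congrFun h0 0) j0
      simpa [hzs] using this
    exact Complex.ext h1 h2
  · exact ⟨fun t j => (zs t j).re, hre, hRe⟩

lemma zero_of_lu {N : ℕ} (R : Matrix (Fin N) (Fin N) (Polynomial ℝ)) (i : Fin N)
    (hLU : LeftUnimodular (colSub R ({i}ᶜ : Finset (Fin N)))) (y : Signal N)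
    (hy : matShift R y = 0) (hyi : ∀ t, y t i = 0) : y = 0 := by
  classical
  have key : matShift (colSub R ({i}ᶜ : Finset (Fin N))) (sigRestrict y ({i}ᶜ : Finset (Fin N)))
      = matShift R y := by
    funext t a
    show (∑ j : {x // x ∈ ({i}ᶜ : Finset (Fin N))},
        polyShift (R a (j : Fin N)) (fun s => y s (j : Fin N)) t)
      = ∑ j, polyShift (R a j) (fun s => y s j) t
    rw [Finset.sum_coe_sort (({i}ᶜ : Finset (Fin N)))
      (fun j => polyShift (R a j) (fun s => y s j) t)]
    have h2 := Finset.sum_compl_add_sum ({i} : Finset (Fin N))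
      (fun j => polyShift (R a j) (fun s => y s j) t)
    rw [Finset.sum_singleton] at h2
    have h3 : polyShift (R a i) (fun s => y s i) t = 0 := by
      rw [show (fun s => y s i) = fun _ => (0:ℝ) from funext hyi, polyShift_zero_sig]
    rw [h3, add_zero] at h2
    exact h2
  obtain ⟨G, hG⟩ := hLU
  have hz : sigRestrict y ({i}ᶜ : Finset (Fin N)) = 0 := by
    have := congrArg (fun M => matShift M (sigRestrict y ({i}ᶜ : Finset (Fin N)))) hG
    simp only [matShift_mul, matShift_one] at this
    rw [key, hy, matShift_zero_sig] at this
    exact this.symm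
  funext t j
  by_cases hj : j = i
  · rw [hj]; exact hyi t
  · have hjm : j ∈ ({i}ᶜ : Finset (Fin N)) := by simp [hj]
    exact congrFun (congrFun hz t) ⟨j, hjm⟩

lemma lu_transport {n : ℕ} (R : Matrix (Fin (n+1)) (Fin (n+1)) (Polynomial ℝ)) (i : Fin (n+1))
    (h : LeftUnimodular (Matrix.of fun a c => R a (i.succAbove c) :
      Matrix (Fin (n+1)) (Fin n) (Polynomial ℝ))) :
    LeftUnimodular (colSub R ({i}ᶜ : Finset (Fin (n+1)))) := by
  classical
  obtain ⟨G', hG'⟩ := h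
  have hmem : ∀ c : Fin n, i.succAbove c ∈ ({i}ᶜ : Finset (Fin (n+1))) := by
    intro c; simp [Fin.succAbove_ne]
  set ε : Fin n ≃ {x // x ∈ ({i}ᶜ : Finset (Fin (n+1)))} :=
    Equiv.ofBijective (fun c => ⟨i.succAbove c, hmem c⟩)
      ⟨fun a b hab => Fin.succAbove_right_injective (congrArg Subtype.val hab),
       fun x => by
        obtain ⟨c, hc⟩ := Fin.exists_succAbove_eq (by
          have := x.2; simp only [Finset.mem_compl, Finset.mem_singleton] at this; exact this)
        exact ⟨c, Subtype.ext hc⟩⟩ with hε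
  refine ⟨Matrix.of fun x j => G' (ε.symm x) j, ?_⟩
  refine Matrix.ext fun x y => ?_
  rw [Matrix.mul_apply]
  simp only [Matrix.of_apply]
  have h1 := congrFun (congrFun hG' (ε.symm x)) (ε.symm y)
  rw [Matrix.mul_apply] at h1
  have h2 : i.succAbove (ε.symm y) = (y : Fin (n+1)) := by
    have := congrArg Subtype.val (ε.apply_symm_apply y)
    exact this
  have h3 : ∀ j, G' (ε.symm x) j * (Matrix.of fun a c => R a (i.succAbove c)) j (ε.symm y)
      = G' (ε.symm x) j * (colSub R ({i}ᶜ : Finset (Fin (n+1)))) j y := by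
    intro j
    congr 1
    show R j (i.succAbove (ε.symm y)) = R j (y : Fin (n+1))
    rw [h2]
  rw [Finset.sum_congr rfl (fun j _ => h3 j)] at h1
  rw [h1]
  by_cases hxy : x = y
  · rw [hxy, Matrix.one_apply_eq, Matrix.one_apply_eq]
  · rw [Matrix.one_apply_ne hxy, Matrix.one_apply_ne (fun hc => hxy (by
      have := congrArg ε hc
      rwa [ε.apply_symm_apply, ε.apply_symm_apply] at this))]


/-- the system is maximally secure (`δ(Σ) = N`) iff every
`N × (N-1)` submatrix of `R` obtained by deleting one column is left
unimodular. -/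
theorem maximally_secure_iff {N : ℕ}
    (R : Matrix (Fin N) (Fin N) (Polynomial ℝ)) (hdet : R.det ≠ 0)
    (B : Set (Signal N)) (hB : B = {y | matShift R y = 0})
    (hBne : ∃ y ∈ B, y ≠ 0) :
    secIdx B = N ↔ ∀ i : Fin N, LeftUnimodular (colSub R ({i}ᶜ : Finset (Fin N))) := by
  classical
  subst hB
  constructor
  · intro hsec i
    by_contra hLU
    obtain ⟨n, rfl⟩ : ∃ n, N = n + 1 := ⟨N - 1, (Nat.succ_pred_eq_of_pos i.pos).symm⟩
    set P' : Matrix (Fin (n+1)) (Fin n) (Polynomial ℝ) :=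
      Matrix.of fun a c => R a (i.succAbove c) with hP'def
    have hP' : ¬ LeftUnimodular P' := fun h => hLU (lu_transport R i h)
    obtain ⟨v, hv0, hvsol⟩ := core_exists_solution P' hP'
    set y : Signal (n+1) := fun t => i.insertNth 0 (v t) with hydef
    have hyi : ∀ t, y t i = 0 := by
      intro t; rw [hydef]; exact Fin.insertNth_apply_same (α := fun _ => ℝ) i 0 (v t)
    have hysab : ∀ t c, y t (i.succAbove c) = v t c := by
      intro t c; rw [hydef]; exact Fin.insertNth_apply_succAbove (α := fun _ => ℝ) i 0 (v t) c
    have hyB : matShift R y = 0 := by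
      funext t a
      show ∑ j, polyShift (R a j) (fun s => y s j) t = 0
      rw [Fin.sum_univ_succAbove (fun j => polyShift (R a j) (fun s => y s j) t) i]
      have h1 : polyShift (R a i) (fun s => y s i) t = 0 := by
        rw [show (fun s => y s i) = fun _ => (0:ℝ) from funext hyi, polyShift_zero_sig]
      have h2 : ∀ c : Fin n, polyShift (R a (i.succAbove c)) (fun s => y s (i.succAbove c)) t
          = polyShift (P' a c) (fun s => v s c) t := by
        intro c
        congr 1
        funext s
        exact hysab s c
      rw [h1, zero_add, Finset.sum_congr rfl (fun c _ => h2 c)]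
      exact congrFun (congrFun hvsol t) a
    have hy0 : y ≠ 0 := by
      intro h0
      apply hv0
      funext t c
      have := congrFun (congrFun h0 t) (i.succAbove c)
      rw [hysab t c] at this
      exact this
    have hle : secIdx {y | matShift R y = 0} ≤ wt y := Nat.sInf_le ⟨y, hyB, hy0, rfl⟩
    rw [hsec] at hle
    have hwt : wt y ≤ n + 1 := by
      have : (sigSupp y).ncard ≤ (Set.univ : Set (Fin (n+1))).ncard :=
        Set.ncard_le_ncard (Set.subset_univ _) Set.finite_univ
      rwa [Set.ncard_univ, Nat.card_eq_fintype_card, Fintype.card_fin] at this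
    have hsupp : sigSupp y = Set.univ := by
      apply Set.eq_of_subset_of_ncard_le (Set.subset_univ _)
      rw [Set.ncard_univ, Nat.card_eq_fintype_card, Fintype.card_fin]
      exact hle
    have : i ∈ sigSupp y := hsupp ▸ Set.mem_univ i
    exact this hyi
  · intro hLU
    have hfull : ∀ y ∈ {y : Signal N | matShift R y = 0}, y ≠ 0 → wt y = N := by
      intro y hy hy0
      have hsupp : sigSupp y = Set.univ := by
        by_contra hne
        obtain ⟨i, hi⟩ := Set.ne_univ_iff_exists_notMem _ |>.mp hne
        exact hy0 (zero_of_lu R i (hLU i) y hy (not_not.mp hi))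
      rw [wt, hsupp, Set.ncard_univ, Nat.card_eq_fintype_card, Fintype.card_fin]
    obtain ⟨y0, hy0B, hy00⟩ := hBne
    apply le_antisymm
    · exact Nat.sInf_le ⟨y0, hy0B, hy00, hfull y0 hy0B hy00⟩
    · refine le_csInf ⟨wt y0, y0, hy0B, hy00, rfl⟩ ?_
      rintro k ⟨y, hyB, hy0, rfl⟩
      exact (hfull y hyB hy0).ge
end

section
/- Let R(ξ) be an N × N polynomial matrix over ℝ[ξ] with nonzero determinant such that every N × (N−1) submatrix of R(ξ) is left unimodular. Then there exists a unimodular N × N polynomial matrix U(ξ) such that U(ξ)R(ξ) is in the Kronecker-Hermite form: its top-left (N−1) × (N−1) block is the identity I_{N−1}, its last column above the diagonal consists of entries −c_1(ξ), …, −c_{N−1}(ξ), its last row is (0, …, 0, a(ξ)), and for every j ∈ {1,…,N−1} the polynomial c_j(ξ) is coprime with a(ξ) and deg c_j(ξ) < deg a(ξ). -/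
open Polynomial

open Matrix


set_option linter.unusedSectionVars false
namespace KHAux

variable {K : Type*} [EuclideanDomain K] [DecidableEq K]

/-- identity except on rows/cols 0 and k, where it is the 2x2 matrix [[a,b],[c,d]] -/
def pl {n : ℕ} (k : Fin (n+1)) (a b c d : K) : Matrix (Fin (n+1)) (Fin (n+1)) K :=
  Matrix.of fun i j =>
    if i = 0 then (if j = 0 then a else if j = k then b else 0)
    else if i = k then (if j = 0 then c else if j = k then d else 0)
    else if i = j then 1 else 0

lemma pl_apply_zero {n : ℕ} (k : Fin (n+1)) (a b c d : K) (j : Fin (n+1)) :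
    pl k a b c d 0 j = if j = 0 then a else if j = k then b else 0 := by
  simp [pl]

lemma pl_apply_k {n : ℕ} {k : Fin (n+1)} (hk : k ≠ 0) (a b c d : K) (j : Fin (n+1)) :
    pl k a b c d k j = if j = 0 then c else if j = k then d else 0 := by
  simp [pl, hk]

lemma pl_apply_other {n : ℕ} {k i : Fin (n+1)} (hi0 : i ≠ 0) (hik : i ≠ k)
    (a b c d : K) (j : Fin (n+1)) :
    pl k a b c d i j = if i = j then 1 else 0 := by
  simp [pl, hi0, hik]

lemma rowsum {n : ℕ} {k : Fin (n+1)} (hk : k ≠ 0) (u v : K) (g : Fin (n+1) → K) :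
    (∑ m, (if m = 0 then u else if m = k then v else 0) * g m) = u * g 0 + v * g k := by
  have h : ∀ m : Fin (n+1), (if m = 0 then u else if m = k then v else 0) * g m
      = (if m = 0 then u * g 0 else 0) + (if m = k then v * g k else 0) := by
    intro m
    rcases eq_or_ne m 0 with rfl | h0
    · simp [Ne.symm hk]
    · rcases eq_or_ne m k with rfl | h1
      · simp [h0]
      · simp [h0, h1]
  rw [Finset.sum_congr rfl fun m _ => h m, Finset.sum_add_distrib]
  simp

lemma rowsum_e {n : ℕ} (i : Fin (n+1)) (g : Fin (n+1) → K) :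
    (∑ m, (if i = m then (1:K) else 0) * g m) = g i := by
  simp [ite_mul]

lemma pl_mul {n : ℕ} {k : Fin (n+1)} (hk : k ≠ 0) (a b c d a' b' c' d' : K) :
    pl k a b c d * pl k a' b' c' d'
      = pl k (a*a'+b*c') (a*b'+b*d') (c*a'+d*c') (c*b'+d*d') := by
  ext i j
  rw [Matrix.mul_apply]
  rcases eq_or_ne i 0 with rfl | hi0
  · simp only [pl_apply_zero]
    rw [rowsum hk]
    rw [pl_apply_zero, pl_apply_k hk]
    rcases eq_or_ne j 0 with rfl | hj0
    · simp [Ne.symm hk]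
    · rcases eq_or_ne j k with rfl | hjk
      · simp [hk]
      · simp [hj0, hjk]
  · rcases eq_or_ne i k with rfl | hik
    · simp only [pl_apply_k hk]
      rw [rowsum hk]
      rw [pl_apply_zero, pl_apply_k hk]
      rcases eq_or_ne j 0 with rfl | hj0
      · simp [Ne.symm hk]
      · rcases eq_or_ne j i with rfl | hji
        · simp [hk]
        · simp [hj0, hji]
    · simp only [pl_apply_other hi0 hik]
      rw [rowsum_e]
      rw [pl_apply_other hi0 hik]

lemma pl_one {n : ℕ} {k : Fin (n+1)} (hk : k ≠ 0) :
    pl k (1:K) 0 0 1 = 1 := by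
  ext i j
  rcases eq_or_ne i 0 with rfl | hi0
  · rw [pl_apply_zero, Matrix.one_apply]
    rcases eq_or_ne j 0 with rfl | hj0
    · simp
    · simp [hj0, Ne.symm hj0]
  · rcases eq_or_ne i k with rfl | hik
    · rw [pl_apply_k hk, Matrix.one_apply]
      rcases eq_or_ne j 0 with rfl | hj0
      · simp [hk, Ne.symm hk]
      · rcases eq_or_ne j i with rfl | hji
        · simp [hj0]
        · simp [hj0, hji, Ne.symm hji]
    · rw [pl_apply_other hi0 hik, Matrix.one_apply]

lemma pl_mulVec {n : ℕ} {k : Fin (n+1)} (hk : k ≠ 0) (a b c d : K) (v : Fin (n+1) → K) :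
    (pl k a b c d).mulVec v
      = fun i => if i = 0 then a * v 0 + b * v k
          else if i = k then c * v 0 + d * v k else v i := by
  funext i
  rw [Matrix.mulVec]
  show (∑ m, pl k a b c d i m * v m) = _
  rcases eq_or_ne i 0 with rfl | hi0
  · simp only [pl_apply_zero]
    rw [rowsum hk]
    simp
  · rcases eq_or_ne i k with rfl | hik
    · simp only [pl_apply_k hk]
      rw [rowsum hk]
      simp [hk]
    · simp only [pl_apply_other hi0 hik]
      rw [rowsum_e]
      simp [hi0, hik]

open EuclideanDomain in
lemma vec_step {n : ℕ} (w : Fin (n+1) → K) (k : Fin (n+1)) (hk : k ≠ 0) :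
    ∃ E E' : Matrix (Fin (n+1)) (Fin (n+1)) K, E * E' = 1 ∧ E' * E = 1 ∧
      E.mulVec w k = 0 ∧ ∀ i, i ≠ 0 → i ≠ k → E.mulVec w i = w i := by
  by_cases hb : w k = 0
  · exact ⟨1, 1, by simp, by simp, by simpa using hb, fun i _ _ => by simp⟩
  · set a := w 0 with ha
    set b := w k with hbdef
    set g := gcd a b with hgdef
    have hg : g ≠ 0 := fun h => hb ((EuclideanDomain.gcd_eq_zero_iff.mp h).2)
    set x := gcdA a b
    set y := gcdB a b
    have hxy : g = a * x + b * y := gcd_eq_gcd_ab a b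
    have hga : g * (a / g) = a := EuclideanDomain.mul_div_cancel' hg (gcd_dvd_left a b)
    have hgb : g * (b / g) = b := EuclideanDomain.mul_div_cancel' hg (gcd_dvd_right a b)
    have e1 : x * (a / g) + y * (b / g) = 1 := by
      have h2 : (x * (a / g) + y * (b / g)) * g = 1 * g := by
        linear_combination x * hga + y * hgb - hxy
      exact mul_right_cancel₀ hg h2
    refine ⟨pl k x y (-(b/g)) (a/g), pl k (a/g) (-y) (b/g) x, ?_, ?_, ?_, ?_⟩
    · rw [pl_mul hk]
      have h2 : x * -y + y * x = 0 := by ring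
      have h3 : -(b / g) * (a / g) + a / g * (b / g) = 0 := by ring
      have h4 : -(b / g) * -y + a / g * x = 1 := by linear_combination e1
      rw [e1, h2, h3, h4, pl_one hk]
    · rw [pl_mul hk]
      have h1 : a / g * x + -y * -(b / g) = 1 := by linear_combination e1
      have h2 : a / g * y + -y * (a / g) = 0 := by ring
      have h3 : b / g * x + x * -(b / g) = 0 := by ring
      have h4 : b / g * y + x * (a / g) = 1 := by linear_combination e1
      rw [h1, h2, h3, h4, pl_one hk]
    · rw [pl_mulVec hk]
      simp only [eq_self_iff_true, if_true, if_neg hk]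
      linear_combination (b / g) * hga - (a / g) * hgb
    · intro i hi0 hik
      rw [pl_mulVec hk]
      simp [hi0, hik]

lemma vec_clear_aux {n : ℕ} (k : ℕ) (v : Fin (n+1) → K) :
    ∃ U V : Matrix (Fin (n+1)) (Fin (n+1)) K, U * V = 1 ∧ V * U = 1 ∧
      ∀ i : Fin (n+1), i ≠ 0 → (i : ℕ) < k → U.mulVec v i = 0 := by
  induction k with
  | zero => exact ⟨1, 1, by simp, by simp, fun i _ h => absurd h (Nat.not_lt_zero _)⟩
  | succ k ih =>
    obtain ⟨U, V, hUV, hVU, hU⟩ := ih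
    by_cases hkn : k < n + 1
    · by_cases hk0 : k = 0
      · exact ⟨U, V, hUV, hVU, fun i hi0 hik => by
          rcases Nat.lt_succ_iff_lt_or_eq.mp hik with h | h
          · exact hU i hi0 h
          · exact absurd (Fin.ext (by simp [h, hk0])) hi0⟩
      · set ik : Fin (n+1) := ⟨k, hkn⟩ with hikdef
        have hik0 : ik ≠ 0 := by
          simp [hikdef, Fin.ext_iff, hk0]
        obtain ⟨E, E', hEE', hE'E, hEk, hEother⟩ := vec_step (U.mulVec v) ik hik0
        refine ⟨E * U, V * E', ?_, ?_, ?_⟩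
        · rw [Matrix.mul_assoc, ← Matrix.mul_assoc U, hUV, Matrix.one_mul, hEE']
        · rw [Matrix.mul_assoc, ← Matrix.mul_assoc E', hE'E, Matrix.one_mul, hVU]
        · intro i hi0 hik
          rw [← Matrix.mulVec_mulVec]
          rcases Nat.lt_succ_iff_lt_or_eq.mp hik with h | h
          · have hine : i ≠ ik := by
              intro he
              rw [he] at h
              exact Nat.lt_irrefl k (by simpa [hikdef] using h)
            rw [hEother i hi0 hine]
            exact hU i hi0 h
          · have : i = ik := Fin.ext h
            rw [this]; exact hEk
    · exact ⟨U, V, hUV, hVU, fun i hi0 _ => hU i hi0 (lt_of_lt_of_le i.isLt (Nat.le_of_not_lt hkn))⟩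

lemma vec_clear {n : ℕ} (v : Fin (n+1) → K) :
    ∃ U V : Matrix (Fin (n+1)) (Fin (n+1)) K, U * V = 1 ∧ V * U = 1 ∧
      ∀ i : Fin (n+1), i ≠ 0 → U.mulVec v i = 0 := by
  obtain ⟨U, V, h1, h2, h3⟩ := vec_clear_aux (n+1) v
  exact ⟨U, V, h1, h2, fun i hi => h3 i hi i.isLt⟩

/-- embed an n x n matrix into (n+1) x (n+1), fixing coordinate 0 -/
def lift1 {n : ℕ} (B : Matrix (Fin n) (Fin n) K) : Matrix (Fin (n+1)) (Fin (n+1)) K :=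
  Matrix.of fun i j =>
    if hi : i = 0 then (if j = 0 then 1 else 0)
    else if hj : j = 0 then 0 else B (i.pred hi) (j.pred hj)

lemma lift1_apply_zero {n : ℕ} (B : Matrix (Fin n) (Fin n) K) (j : Fin (n+1)) :
    lift1 B 0 j = if j = 0 then 1 else 0 := by simp [lift1]

lemma lift1_apply_succ_zero {n : ℕ} (B : Matrix (Fin n) (Fin n) K) (i : Fin n) :
    lift1 B i.succ 0 = 0 := by simp [lift1, Fin.succ_ne_zero]

lemma lift1_apply_succ_succ {n : ℕ} (B : Matrix (Fin n) (Fin n) K) (i j : Fin n) :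
    lift1 B i.succ j.succ = B i j := by simp [lift1, Fin.succ_ne_zero]

lemma lift1_mul_apply_zero {n : ℕ} (B : Matrix (Fin n) (Fin n) K)
    (M : Matrix (Fin (n+1)) (Fin (n+1)) K) (j : Fin (n+1)) :
    (lift1 B * M) 0 j = M 0 j := by
  rw [Matrix.mul_apply, Fin.sum_univ_succ]
  simp [lift1_apply_zero, Fin.succ_ne_zero]

lemma lift1_mul_apply_succ {n : ℕ} (B : Matrix (Fin n) (Fin n) K)
    (M : Matrix (Fin (n+1)) (Fin (n+1)) K) (i : Fin n) (j : Fin (n+1)) :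
    (lift1 B * M) i.succ j = ∑ m : Fin n, B i m * M m.succ j := by
  rw [Matrix.mul_apply, Fin.sum_univ_succ, lift1_apply_succ_zero]
  simp only [lift1_apply_succ_succ, zero_mul, zero_add]

lemma lift1_mul {n : ℕ} (A B : Matrix (Fin n) (Fin n) K) :
    lift1 A * lift1 B = lift1 (A * B) := by
  ext i j
  refine Fin.cases ?_ (fun i => ?_) i
  · rw [lift1_mul_apply_zero, lift1_apply_zero]
    refine Fin.cases ?_ (fun j => ?_) j
    · simp [lift1_apply_zero]
    · simp [lift1_apply_zero, Fin.succ_ne_zero]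
  · rw [lift1_mul_apply_succ]
    refine Fin.cases ?_ (fun j => ?_) j
    · simp [lift1_apply_succ_zero]
    · simp only [lift1_apply_succ_succ]
      rw [Matrix.mul_apply]

lemma lift1_one {n : ℕ} : lift1 (1 : Matrix (Fin n) (Fin n) K) = 1 := by
  ext i j
  refine Fin.cases ?_ (fun i => ?_) i
  · rw [lift1_apply_zero, Matrix.one_apply]
    refine Fin.cases ?_ (fun j => ?_) j
    · simp
    · simp [(Fin.succ_ne_zero j).symm, Fin.succ_ne_zero]
  · refine Fin.cases ?_ (fun j => ?_) j
    · simp [lift1_apply_succ_zero, Matrix.one_apply, Fin.succ_ne_zero]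
    · rw [lift1_apply_succ_succ, Matrix.one_apply, Matrix.one_apply]
      simp [Fin.succ_inj]

lemma tri : ∀ (n : ℕ) (M : Matrix (Fin n) (Fin n) K),
    ∃ U V : Matrix (Fin n) (Fin n) K, U * V = 1 ∧ V * U = 1 ∧
      ∀ i j : Fin n, j < i → (U * M) i j = 0 := by
  intro n
  induction n with
  | zero => exact fun M => ⟨1, 1, by simp, by simp, fun i => i.elim0⟩
  | succ n ih =>
    intro M
    obtain ⟨U₁, V₁, h11, h12, hcol⟩ := vec_clear (fun i => M i 0)
    set M₁ := U₁ * M with hM₁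
    have hcol' : ∀ i : Fin (n+1), i ≠ 0 → M₁ i 0 = 0 := by
      intro i hi
      have := hcol i hi
      rw [Matrix.mulVec, dotProduct] at this
      rw [hM₁, Matrix.mul_apply]
      exact this
    obtain ⟨U', V', h21, h22, htri'⟩ := ih (Matrix.of fun i j : Fin n => M₁ i.succ j.succ)
    refine ⟨lift1 U' * U₁, V₁ * lift1 V', ?_, ?_, ?_⟩
    · rw [Matrix.mul_assoc, ← Matrix.mul_assoc U₁, h11, Matrix.one_mul, lift1_mul, h21,
        lift1_one]
    · rw [Matrix.mul_assoc, ← Matrix.mul_assoc (lift1 V'), lift1_mul, h22, lift1_one,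
        Matrix.one_mul, h12]
    · intro i j hji
      rw [Matrix.mul_assoc, ← hM₁]
      have hi0 : i ≠ 0 := by
        intro h
        subst h
        exact absurd hji (by simp)
      obtain ⟨i', rfl⟩ := Fin.eq_succ_of_ne_zero hi0
      rw [lift1_mul_apply_succ]
      rcases eq_or_ne j 0 with rfl | hj0
      · refine Finset.sum_eq_zero fun m _ => ?_
        rw [hcol' m.succ (Fin.succ_ne_zero m), mul_zero]
      · obtain ⟨j', rfl⟩ := Fin.eq_succ_of_ne_zero hj0
        have hji' : j' < i' := by
          rwa [Fin.succ_lt_succ_iff] at hji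
        have h0 := htri' i' j' hji'
        rw [Matrix.mul_apply] at h0
        simpa using h0

/-- embed an N x N matrix into (N+1) x (N+1), fixing the last coordinate -/
def lift2 {N : ℕ} (B : Matrix (Fin N) (Fin N) K) : Matrix (Fin (N+1)) (Fin (N+1)) K :=
  Matrix.of fun i j =>
    if hi : i = Fin.last N then (if j = Fin.last N then 1 else 0)
    else if hj : j = Fin.last N then 0 else B (i.castPred hi) (j.castPred hj)

lemma lift2_apply_last {N : ℕ} (B : Matrix (Fin N) (Fin N) K) (j : Fin (N+1)) :
    lift2 B (Fin.last N) j = if j = Fin.last N then 1 else 0 := by simp [lift2]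

lemma lift2_apply_cast_last {N : ℕ} (B : Matrix (Fin N) (Fin N) K) (i : Fin N) :
    lift2 B i.castSucc (Fin.last N) = 0 := by
  simp [lift2, (Fin.castSucc_lt_last i).ne]

lemma lift2_apply_cast_cast {N : ℕ} (B : Matrix (Fin N) (Fin N) K) (i j : Fin N) :
    lift2 B i.castSucc j.castSucc = B i j := by
  simp [lift2, (Fin.castSucc_lt_last i).ne, (Fin.castSucc_lt_last j).ne]

lemma lift2_mul_apply_last {N : ℕ} (B : Matrix (Fin N) (Fin N) K)
    (M : Matrix (Fin (N+1)) (Fin (N+1)) K) (j : Fin (N+1)) :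
    (lift2 B * M) (Fin.last N) j = M (Fin.last N) j := by
  rw [Matrix.mul_apply, Fin.sum_univ_castSucc]
  simp [lift2_apply_last, (Fin.castSucc_lt_last _).ne]

lemma lift2_mul_apply_cast {N : ℕ} (B : Matrix (Fin N) (Fin N) K)
    (M : Matrix (Fin (N+1)) (Fin (N+1)) K) (i : Fin N) (j : Fin (N+1)) :
    (lift2 B * M) i.castSucc j = ∑ m : Fin N, B i m * M m.castSucc j := by
  rw [Matrix.mul_apply, Fin.sum_univ_castSucc, lift2_apply_cast_last]
  simp only [lift2_apply_cast_cast, zero_mul, add_zero]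

lemma lift2_mul {N : ℕ} (A B : Matrix (Fin N) (Fin N) K) :
    lift2 A * lift2 B = lift2 (A * B) := by
  ext i j
  refine Fin.lastCases ?_ (fun i => ?_) i
  · rw [lift2_mul_apply_last, lift2_apply_last, lift2_apply_last]
  · rw [lift2_mul_apply_cast]
    refine Fin.lastCases ?_ (fun j => ?_) j
    · simp [lift2_apply_cast_last]
    · simp only [lift2_apply_cast_cast]
      rw [Matrix.mul_apply]

lemma lift2_one {N : ℕ} : lift2 (1 : Matrix (Fin N) (Fin N) K) = 1 := by
  ext i j
  refine Fin.lastCases ?_ (fun i => ?_) i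
  · rw [lift2_apply_last, Matrix.one_apply]
    refine Fin.lastCases ?_ (fun j => ?_) j
    · simp
    · simp [(Fin.castSucc_lt_last j).ne, (Fin.castSucc_lt_last j).ne']
  · refine Fin.lastCases ?_ (fun j => ?_) j
    · simp [lift2_apply_cast_last, Matrix.one_apply, (Fin.castSucc_lt_last i).ne]
    · rw [lift2_apply_cast_cast, Matrix.one_apply, Matrix.one_apply]
      simp [Fin.castSucc_inj]

/-- column operation: add q i times the last row to row i -/
def colAdd {N : ℕ} (q : Fin N → K) : Matrix (Fin (N+1)) (Fin (N+1)) K :=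
  Matrix.of fun i j =>
    if i = j then 1
    else if hi : i = Fin.last N then 0
    else if j = Fin.last N then q (i.castPred hi) else 0

lemma colAdd_apply_last {N : ℕ} (q : Fin N → K) (j : Fin (N+1)) :
    colAdd q (Fin.last N) j = if Fin.last N = j then 1 else 0 := by
  rcases eq_or_ne (Fin.last N) j with rfl | h
  · simp [colAdd]
  · simp [colAdd, h]

lemma colAdd_apply_cast {N : ℕ} (q : Fin N → K) (i : Fin N) (j : Fin (N+1)) :
    colAdd q i.castSucc j
      = (if i.castSucc = j then 1 else 0) + (if j = Fin.last N then q i else 0) := by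
  rcases eq_or_ne (i.castSucc) j with rfl | h
  · simp [colAdd, (Fin.castSucc_lt_last i).ne]
  · simp only [colAdd, Matrix.of_apply, if_neg h, dif_neg (Fin.castSucc_lt_last i).ne]
    rcases eq_or_ne j (Fin.last N) with rfl | hj
    · simp
    · simp [hj]

lemma colAdd_mul_apply_last {N : ℕ} (q : Fin N → K)
    (M : Matrix (Fin (N+1)) (Fin (N+1)) K) (j : Fin (N+1)) :
    (colAdd q * M) (Fin.last N) j = M (Fin.last N) j := by
  rw [Matrix.mul_apply]
  simp only [colAdd_apply_last, ite_mul, one_mul, zero_mul]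
  simp

lemma colAdd_mul_apply_cast {N : ℕ} (q : Fin N → K)
    (M : Matrix (Fin (N+1)) (Fin (N+1)) K) (i : Fin N) (j : Fin (N+1)) :
    (colAdd q * M) i.castSucc j = M i.castSucc j + q i * M (Fin.last N) j := by
  rw [Matrix.mul_apply]
  simp only [colAdd_apply_cast, add_mul, ite_mul, one_mul, zero_mul]
  rw [Finset.sum_add_distrib]
  simp

lemma colAdd_mul_colAdd {N : ℕ} (q q' : Fin N → K) :
    colAdd q * colAdd q' = colAdd (q + q') := by
  ext i j
  refine Fin.lastCases ?_ (fun i => ?_) i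
  · rw [colAdd_mul_apply_last, colAdd_apply_last, colAdd_apply_last]
  · rw [colAdd_mul_apply_cast, colAdd_apply_cast, colAdd_apply_cast, colAdd_apply_last]
    rcases eq_or_ne j (Fin.last N) with rfl | hj
    · simp [(Fin.castSucc_lt_last i).ne]
      ring
    · simp [hj, Ne.symm hj]

lemma colAdd_zero {N : ℕ} : colAdd (0 : Fin N → K) = 1 := by
  ext i j
  refine Fin.lastCases ?_ (fun i => ?_) i
  · rw [colAdd_apply_last, Matrix.one_apply]
  · rw [colAdd_apply_cast, Matrix.one_apply]
    simp

lemma colAdd_inv {N : ℕ} (q : Fin N → K) :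
    colAdd q * colAdd (-q) = 1 ∧ colAdd (-q) * colAdd q = 1 := by
  constructor
  · rw [colAdd_mul_colAdd]
    simpa using colAdd_zero
  · rw [colAdd_mul_colAdd]
    simpa using colAdd_zero

end KHAux


lemma colSub_mul {N : ℕ} (W R : Matrix (Fin N) (Fin N) (Polynomial ℝ)) (J : Finset (Fin N)) :
    colSub (W * R) J = W * colSub R J := by
  ext i j
  rw [Matrix.mul_apply]
  rfl

lemma mul_inv_chain {n : ℕ} (A B C A' B' C' : Matrix (Fin n) (Fin n) (Polynomial ℝ))
    (h1 : A * A' = 1) (h2 : B * B' = 1) (h3 : C * C' = 1) :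
    (A * (B * C)) * (C' * (B' * A')) = 1 := by
  rw [Matrix.mul_assoc, Matrix.mul_assoc, ← Matrix.mul_assoc C C', h3, Matrix.one_mul,
    ← Matrix.mul_assoc B B', h2, Matrix.one_mul, h1]

/-- Kronecker-Hermite canonical kernel representation of a
maximally secure system (matrix size `N + 1`). -/
theorem kronecker_hermite_max_secure {N : ℕ}
    (R : Matrix (Fin (N + 1)) (Fin (N + 1)) (Polynomial ℝ)) (hdet : R.det ≠ 0)
    (hsub : ∀ i : Fin (N + 1), LeftUnimodular (colSub R ({i}ᶜ : Finset (Fin (N + 1))))) :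
    ∃ (U : Matrix (Fin (N + 1)) (Fin (N + 1)) (Polynomial ℝ))
      (c : Fin N → Polynomial ℝ) (a : Polynomial ℝ),
      (∃ V : Matrix (Fin (N + 1)) (Fin (N + 1)) (Polynomial ℝ), U * V = 1 ∧ V * U = 1) ∧
      (∀ i j : Fin N, (U * R) i.castSucc j.castSucc = if i = j then 1 else 0) ∧
      (∀ i : Fin N, (U * R) i.castSucc (Fin.last N) = -c i) ∧
      (∀ j : Fin N, (U * R) (Fin.last N) j.castSucc = 0) ∧
      (U * R) (Fin.last N) (Fin.last N) = a ∧
      (∀ j : Fin N, IsCoprime (c j) a ∧ (c j).degree < a.degree) := 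
 by
  classical
  obtain ⟨U₁, V₁, h11, h12, htri⟩ := KHAux.tri (N+1) R
  set M₁ := U₁ * R with hM₁def
  set T₀ : Matrix (Fin N) (Fin N) (Polynomial ℝ) :=
    Matrix.of (fun i j : Fin N => M₁ i.castSucc j.castSucc) with hT₀def
  obtain ⟨G, hG⟩ := hsub (Fin.last N)
  have hmemlast : ∀ i : Fin N, i.castSucc ∈ ({Fin.last N}ᶜ : Finset (Fin (N+1))) :=
    fun i => by simp [(Fin.castSucc_lt_last i).ne]
  have hunit : IsUnit T₀.det := by
    have hH : (G * V₁) * colSub M₁ ({Fin.last N}ᶜ : Finset (Fin (N+1))) = 1 := by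
      rw [hM₁def, colSub_mul, ← Matrix.mul_assoc, Matrix.mul_assoc G V₁ U₁, h12,
        Matrix.mul_one, hG]
    have hHT : (Matrix.of fun i j : Fin N =>
        (G * V₁) ⟨i.castSucc, hmemlast i⟩ j.castSucc) * T₀ = 1 := by
      funext i j
      have h2 : ((G * V₁) * colSub M₁ ({Fin.last N}ᶜ : Finset (Fin (N+1))))
            ⟨i.castSucc, hmemlast i⟩ ⟨j.castSucc, hmemlast j⟩
          = (1 : Matrix {x // x ∈ ({Fin.last N}ᶜ : Finset (Fin (N+1)))}
              {x // x ∈ ({Fin.last N}ᶜ : Finset (Fin (N+1)))} (Polynomial ℝ))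
              ⟨i.castSucc, hmemlast i⟩ ⟨j.castSucc, hmemlast j⟩ := by
        rw [hH]
      rw [Matrix.mul_apply, Fin.sum_univ_castSucc] at h2
      have hz : colSub M₁ ({Fin.last N}ᶜ : Finset (Fin (N+1))) (Fin.last N)
          ⟨j.castSucc, hmemlast j⟩ = 0 := htri _ _ (Fin.castSucc_lt_last j)
      rw [hz, mul_zero, add_zero] at h2
      have h4 : ((1 : Matrix {x // x ∈ ({Fin.last N}ᶜ : Finset (Fin (N+1)))}
            {x // x ∈ ({Fin.last N}ᶜ : Finset (Fin (N+1)))} (Polynomial ℝ))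
            ⟨i.castSucc, hmemlast i⟩ ⟨j.castSucc, hmemlast j⟩)
          = if i = j then (1 : Polynomial ℝ) else 0 := by
        rw [Matrix.one_apply]
        rcases eq_or_ne i j with rfl | hij
        · simp
        · simp [hij, Subtype.ext_iff, Fin.castSucc_inj]
      rw [h4] at h2
      rw [Matrix.mul_apply, Matrix.one_apply]
      exact h2
    have hd := congrArg Matrix.det hHT
    rw [Matrix.det_mul, Matrix.det_one] at hd
    exact IsUnit.of_mul_eq_one _ (by rw [mul_comm] at hd; exact hd)
  have hT₀inv : T₀⁻¹ * T₀ = 1 := Matrix.nonsing_inv_mul _ hunit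
  have hT₀inv' : T₀ * T₀⁻¹ = 1 := Matrix.mul_nonsing_inv _ hunit
  set M₂ := KHAux.lift2 T₀⁻¹ * M₁ with hM₂def
  have hM₂cc : ∀ i j : Fin N, M₂ i.castSucc j.castSucc = if i = j then 1 else 0 := by
    intro i j
    rw [hM₂def, KHAux.lift2_mul_apply_cast]
    have h5 : (∑ m : Fin N, T₀⁻¹ i m * M₁ m.castSucc j.castSucc) = (T₀⁻¹ * T₀) i j := by
      rw [Matrix.mul_apply]; rfl
    rw [h5, hT₀inv, Matrix.one_apply]
  have hM₂lastc : ∀ j : Fin N, M₂ (Fin.last N) j.castSucc = 0 := by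
    intro j
    rw [hM₂def, KHAux.lift2_mul_apply_last]
    exact htri _ _ (Fin.castSucc_lt_last j)
  set a0 := M₂ (Fin.last N) (Fin.last N) with ha0def
  have hW2 : KHAux.lift2 T₀⁻¹ * KHAux.lift2 T₀ = 1 := by
    rw [KHAux.lift2_mul, hT₀inv, KHAux.lift2_one]
  have hW2' : KHAux.lift2 T₀ * KHAux.lift2 T₀⁻¹ = 1 := by
    rw [KHAux.lift2_mul, hT₀inv', KHAux.lift2_one]
  have ha0 : a0 ≠ 0 := by
    intro h0
    have hrow : ∀ j, M₂ (Fin.last N) j = 0 := by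
      intro j
      refine Fin.lastCases ?_ (fun j => ?_) j
      · rw [← ha0def]; exact h0
      · exact hM₂lastc j
    have hdet2 : M₂.det = 0 := Matrix.det_eq_zero_of_row_eq_zero (Fin.last N) hrow
    rw [hM₂def, hM₁def, ← Matrix.mul_assoc, Matrix.det_mul] at hdet2
    have hUnitdet : KHAux.lift2 T₀⁻¹ * U₁ * (V₁ * KHAux.lift2 T₀) = 1 := by
      rw [Matrix.mul_assoc, ← Matrix.mul_assoc U₁, h11, Matrix.one_mul, hW2]
    have hdetne : (KHAux.lift2 T₀⁻¹ * U₁).det ≠ 0 := by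
      intro hz
      have hdd := congrArg Matrix.det hUnitdet
      rw [Matrix.det_mul, hz, zero_mul, Matrix.det_one] at hdd
      exact zero_ne_one hdd
    rcases mul_eq_zero.mp hdet2 with h | h
    · exact hdetne h
    · exact hdet h
  obtain ⟨qf, rf, hqr, hdegr⟩ : ∃ (qf rf : Fin N → Polynomial ℝ),
      (∀ i, M₂ i.castSucc (Fin.last N) - qf i * a0 = rf i) ∧
      (∀ i, (rf i).degree < a0.degree) := by
    refine ⟨fun i => (M₂ i.castSucc (Fin.last N) /ₘ (a0 * Polynomial.C a0.leadingCoeff⁻¹))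
        * Polynomial.C a0.leadingCoeff⁻¹,
      fun i => M₂ i.castSucc (Fin.last N) %ₘ (a0 * Polynomial.C a0.leadingCoeff⁻¹),
      fun i => ?_, fun i => ?_⟩
    · have h := Polynomial.modByMonic_add_div (M₂ i.castSucc (Fin.last N))
        (a0 * Polynomial.C a0.leadingCoeff⁻¹)
      linear_combination -h
    · rw [← Polynomial.degree_mul_leadingCoeff_inv a0 ha0]
      exact Polynomial.degree_modByMonic_lt _ (Polynomial.monic_mul_leadingCoeff_inv ha0)
  set M₃ := KHAux.colAdd (-qf) * M₂ with hM₃def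
  have hM₃cc : ∀ i j : Fin N, M₃ i.castSucc j.castSucc = if i = j then 1 else 0 := by
    intro i j
    rw [hM₃def, KHAux.colAdd_mul_apply_cast, hM₂lastc j, mul_zero, add_zero, hM₂cc]
  have hM₃cl : ∀ i : Fin N, M₃ i.castSucc (Fin.last N) = rf i := by
    intro i
    rw [hM₃def, KHAux.colAdd_mul_apply_cast, ← ha0def]
    have h := hqr i
    simp only [Pi.neg_apply]
    linear_combination h
  have hM₃lc : ∀ j : Fin N, M₃ (Fin.last N) j.castSucc = 0 := by
    intro j
    rw [hM₃def, KHAux.colAdd_mul_apply_last]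
    exact hM₂lastc j
  have hM₃ll : M₃ (Fin.last N) (Fin.last N) = a0 := by
    rw [hM₃def, KHAux.colAdd_mul_apply_last, ← ha0def]
  set U := KHAux.colAdd (-qf) * (KHAux.lift2 T₀⁻¹ * U₁) with hUdef
  set V := V₁ * (KHAux.lift2 T₀ * KHAux.colAdd qf) with hVdef
  have hUV : U * V = 1 := by
    rw [hUdef, hVdef]
    exact mul_inv_chain _ _ _ _ _ _ (KHAux.colAdd_inv qf).2 hW2 h11
  have hVU : V * U = 1 := by
    rw [hUdef, hVdef]
    exact mul_inv_chain _ _ _ _ _ _ h12 hW2' (KHAux.colAdd_inv qf).1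
  have hUR : U * R = M₃ := by
    rw [hUdef, hM₃def, hM₂def, hM₁def, Matrix.mul_assoc, Matrix.mul_assoc]
  have hcop : ∀ j : Fin N, ∃ u v : Polynomial ℝ, u * rf j + v * a0 = 1 := by
    intro j
    obtain ⟨G2, hG2⟩ := hsub j.castSucc
    have hlst : Fin.last N ∈ ({j.castSucc}ᶜ : Finset (Fin (N+1))) := by
      simp [(Fin.castSucc_lt_last j).ne']
    have hH3 : (G2 * V) * colSub M₃ ({j.castSucc}ᶜ : Finset (Fin (N+1))) = 1 := by
      rw [← hUR, colSub_mul, ← Matrix.mul_assoc, Matrix.mul_assoc G2 V U, hVU,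
        Matrix.mul_one, hG2]
    have hmemi : ∀ i : Fin N, i ≠ j →
        i.castSucc ∈ ({j.castSucc}ᶜ : Finset (Fin (N+1))) := by
      intro i hij
      simp [Fin.castSucc_inj, hij]
    have h0 : ∀ i : Fin N, i ≠ j → (G2 * V) ⟨Fin.last N, hlst⟩ i.castSucc = 0 := by
      intro i hij
      have h2 : ((G2 * V) * colSub M₃ ({j.castSucc}ᶜ : Finset (Fin (N+1))))
            ⟨Fin.last N, hlst⟩ ⟨i.castSucc, hmemi i hij⟩
          = (1 : Matrix {x // x ∈ ({j.castSucc}ᶜ : Finset (Fin (N+1)))}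
              {x // x ∈ ({j.castSucc}ᶜ : Finset (Fin (N+1)))} (Polynomial ℝ))
              ⟨Fin.last N, hlst⟩ ⟨i.castSucc, hmemi i hij⟩ := by
        rw [hH3]
      have hne : (⟨Fin.last N, hlst⟩ : {x // x ∈ ({j.castSucc}ᶜ : Finset (Fin (N+1)))})
          ≠ ⟨i.castSucc, hmemi i hij⟩ := by
        simp [Subtype.ext_iff]
        exact (Fin.castSucc_lt_last i).ne'
      rw [Matrix.one_apply_ne hne, Matrix.mul_apply, Fin.sum_univ_castSucc] at h2
      have hz1 : ∀ m : Fin N, colSub M₃ ({j.castSucc}ᶜ : Finset (Fin (N+1))) m.castSucc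
          ⟨i.castSucc, hmemi i hij⟩ = if m = i then 1 else 0 := fun m => hM₃cc m i
      have hz2 : colSub M₃ ({j.castSucc}ᶜ : Finset (Fin (N+1))) (Fin.last N)
          ⟨i.castSucc, hmemi i hij⟩ = 0 := hM₃lc i
      rw [hz2, mul_zero, add_zero] at h2
      simp only [hz1, mul_ite, mul_one, mul_zero] at h2
      rw [Finset.sum_ite_eq' Finset.univ i
        (fun m => (G2 * V) ⟨Fin.last N, hlst⟩ m.castSucc)] at h2
      simpa using h2
    have h1 : ((G2 * V) * colSub M₃ ({j.castSucc}ᶜ : Finset (Fin (N+1))))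
          ⟨Fin.last N, hlst⟩ ⟨Fin.last N, hlst⟩
        = (1 : Matrix {x // x ∈ ({j.castSucc}ᶜ : Finset (Fin (N+1)))}
            {x // x ∈ ({j.castSucc}ᶜ : Finset (Fin (N+1)))} (Polynomial ℝ))
            ⟨Fin.last N, hlst⟩ ⟨Fin.last N, hlst⟩ := by
      rw [hH3]
    rw [Matrix.one_apply_eq, Matrix.mul_apply, Fin.sum_univ_castSucc] at h1
    have hz3 : ∀ m : Fin N, colSub M₃ ({j.castSucc}ᶜ : Finset (Fin (N+1))) m.castSucc
        ⟨Fin.last N, hlst⟩ = rf m := fun m => hM₃cl m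
    have hz4 : colSub M₃ ({j.castSucc}ᶜ : Finset (Fin (N+1))) (Fin.last N)
        ⟨Fin.last N, hlst⟩ = a0 := hM₃ll
    rw [hz4] at h1
    simp only [hz3] at h1
    rw [Finset.sum_eq_single j (fun m _ hmj => by rw [h0 m hmj, zero_mul])
      (fun h => absurd (Finset.mem_univ j) h)] at h1
    exact ⟨(G2 * V) ⟨Fin.last N, hlst⟩ j.castSucc, (G2 * V) ⟨Fin.last N, hlst⟩ (Fin.last N), h1⟩
  refine ⟨U, fun i => -(rf i), a0, ⟨V, hUV, hVU⟩, ?_, ?_, ?_, ?_, ?_⟩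
  · intro i j
    rw [hUR]
    exact hM₃cc i j
  · intro i
    rw [hUR, hM₃cl i]
    simp
  · intro j
    rw [hUR]
    exact hM₃lc j
  · rw [hUR]
    exact hM₃ll
  · intro j
    obtain ⟨u, v, h⟩ := hcop j
    constructor
    · exact ⟨-u, v, by linear_combination h⟩
    · simpa [Polynomial.degree_neg] using hdegr j
end

section
/- Let R(ξ) be an N × N polynomial matrix over ℝ[ξ] with nonzero determinant, and let L be the largest integer such that for every subset J ⊆ {1,…,N} of cardinality L the N × L submatrix R_J(ξ) is left unimodular. Then there exists a unimodular N × N polynomial matrix U(ξ) such that U(ξ)R(ξ) has the block form [[I_L, −M_1(ξ)], [0, D(ξ)]], where D(ξ) is an (N−L) × (N−L) upper triangular polynomial matrix and, for each i ∈ {1,…,N−L}, the degree of the diagonal entry d_ii(ξ) of D(ξ) is strictly greater than the degree of every other entry in the corresponding column of U(ξ)R(ξ). -/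
open Polynomial

section KroneckerHermiteAux


namespace KHAux

open Matrix

variable {n : Type*} [Fintype n] [DecidableEq n]

/-- 2x2 elementary matrix supported on rows/cols `i₀`, `a`. -/
noncomputable def elem2 (i₀ a : n) (p q r s : Polynomial ℝ) : Matrix n n (Polynomial ℝ) :=
  Matrix.of fun i j =>
    if i = i₀ then (if j = i₀ then p else if j = a then q else 0)
    else if i = a then (if j = i₀ then r else if j = a then s else 0)
    else if i = j then 1 else 0

lemma sum_two {i₀ a : n} (h : i₀ ≠ a) (g : n → Polynomial ℝ)
    (hg : ∀ j, j ≠ i₀ → j ≠ a → g j = 0) :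
    ∑ j, g j = g i₀ + g a := by
  rw [← Finset.sum_pair h]
  refine (Finset.sum_subset (Finset.subset_univ _) (fun x _ hx => ?_)).symm
  simp only [Finset.mem_insert, Finset.mem_singleton] at hx
  push_neg at hx
  exact hg x hx.1 hx.2

lemma elem2_mul_apply {i₀ a : n} (h : i₀ ≠ a) (p q r s : Polynomial ℝ)
    (M : Matrix n n (Polynomial ℝ)) (i j : n) :
    (elem2 i₀ a p q r s * M) i j =
      if i = i₀ then p * M i₀ j + q * M a j
      else if i = a then r * M i₀ j + s * M a j
      else M i j := by
  rw [Matrix.mul_apply]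
  by_cases hi : i = i₀
  · subst hi
    rw [sum_two h _ (fun k hk1 hk2 => by simp [elem2, hk1, hk2])]
    simp [elem2, h, h.symm]
  · by_cases ha : i = a
    · subst ha
      rw [sum_two h _ (fun k hk1 hk2 => by simp [elem2, hk1, hk2, hi])]
      simp [elem2, h, h.symm, hi]
    · rw [Finset.sum_eq_single i (fun k _ hk => by simp [elem2, hi, ha, (Ne.symm hk)])
        (fun hmem => absurd (Finset.mem_univ i) hmem)]
      simp [elem2, hi, ha]

lemma elem2_mulVec {i₀ a : n} (h : i₀ ≠ a) (p q r s : Polynomial ℝ)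
    (v : n → Polynomial ℝ) (i : n) :
    (elem2 i₀ a p q r s).mulVec v i =
      if i = i₀ then p * v i₀ + q * v a
      else if i = a then r * v i₀ + s * v a
      else v i := by
  rw [Matrix.mulVec, dotProduct]
  by_cases hi : i = i₀
  · subst hi
    rw [sum_two h _ (fun k hk1 hk2 => by simp [elem2, hk1, hk2])]
    simp [elem2, h, h.symm]
  · by_cases ha : i = a
    · subst ha
      rw [sum_two h _ (fun k hk1 hk2 => by simp [elem2, hk1, hk2, hi])]
      simp [elem2, h, h.symm, hi]
    · rw [Finset.sum_eq_single i (fun k _ hk => by simp [elem2, hi, ha, (Ne.symm hk)])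
        (fun hmem => absurd (Finset.mem_univ i) hmem)]
      simp [elem2, hi, ha]

lemma elem2_mul_elem2 {i₀ a : n} (h : i₀ ≠ a) (p q r s p' q' r' s' : Polynomial ℝ) :
    elem2 i₀ a p q r s * elem2 i₀ a p' q' r' s' =
      elem2 i₀ a (p*p'+q*r') (p*q'+q*s') (r*p'+s*r') (r*q'+s*s') := by
  ext i j
  rw [elem2_mul_apply h]
  simp only [elem2, Matrix.of_apply]
  split_ifs <;> simp_all <;> ring

lemma elem2_id {i₀ a : n} (h : i₀ ≠ a) : elem2 i₀ a 1 0 0 1 = 1 := by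
  ext i j
  simp only [elem2, Matrix.of_apply, Matrix.one_apply]
  split_ifs <;> simp_all

lemma bezout2 (a b : Polynomial ℝ) :
    ∃ p q r s : Polynomial ℝ, p * s - q * r = 1 ∧ r * a + s * b = 0 := by
  by_cases hg : EuclideanDomain.gcd a b = 0
  · obtain ⟨ha, hb⟩ := EuclideanDomain.gcd_eq_zero_iff.mp hg
    exact ⟨1, 0, 0, 1, by ring, by simp [ha, hb]⟩
  · obtain ⟨a', ha'⟩ := EuclideanDomain.gcd_dvd_left a b
    obtain ⟨b', hb'⟩ := EuclideanDomain.gcd_dvd_right a b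
    have hG : EuclideanDomain.gcd a b =
        a * EuclideanDomain.gcdA a b + b * EuclideanDomain.gcdB a b :=
      EuclideanDomain.gcd_eq_gcd_ab a b
    refine ⟨EuclideanDomain.gcdA a b, EuclideanDomain.gcdB a b, -b', a', ?_, ?_⟩
    · refine mul_left_cancel₀ hg ?_
      linear_combination (-1 : Polynomial ℝ) * hG - EuclideanDomain.gcdA a b * ha'
        - EuclideanDomain.gcdB a b * hb'
    · linear_combination -b' * ha' + a' * hb'

lemma clear_col (v : n → Polynomial ℝ) (i₀ : n) (S : Finset n) (hS : i₀ ∉ S) :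
    ∃ U U' : Matrix n n (Polynomial ℝ), U * U' = 1 ∧ U' * U = 1 ∧
      ∀ i ∈ S, U.mulVec v i = 0 := by
  induction S using Finset.induction_on with
  | empty => exact ⟨1, 1, by simp, by simp, by simp⟩
  | @insert a S ha IH =>
    have hi₀a : i₀ ≠ a := fun h => hS (h ▸ Finset.mem_insert_self a S)
    have hi₀S : i₀ ∉ S := fun h => hS (Finset.mem_insert_of_mem h)
    obtain ⟨U, U', hUU', hU'U, hU⟩ := IH hi₀S
    obtain ⟨p, q, r, s, hd, hz⟩ := bezout2 (U.mulVec v i₀) (U.mulVec v a)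
    set E := elem2 i₀ a p q r s
    set E' := elem2 i₀ a s (-q) (-r) p
    have hEE' : E * E' = 1 := by
      rw [elem2_mul_elem2 hi₀a]
      have h1 : p * s + q * -r = 1 := by linear_combination hd
      have h2 : p * -q + q * p = 0 := by ring
      have h3 : r * s + s * -r = 0 := by ring
      have h4 : r * -q + s * p = 1 := by linear_combination hd
      rw [h1, h2, h3, h4, elem2_id hi₀a]
    have hE'E : E' * E = 1 := by
      rw [elem2_mul_elem2 hi₀a]
      have h1 : s * p + -q * r = 1 := by linear_combination hd
      have h2 : s * q + -q * s = 0 := by ring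
      have h3 : -r * p + p * r = 0 := by ring
      have h4 : -r * q + p * s = 1 := by linear_combination hd
      rw [h1, h2, h3, h4, elem2_id hi₀a]
    refine ⟨E * U, U' * E', ?_, ?_, ?_⟩
    · calc E * U * (U' * E') = E * (U * U' * E') := by rw [Matrix.mul_assoc, Matrix.mul_assoc]
        _ = E * E' := by rw [hUU', Matrix.one_mul]
        _ = 1 := hEE'
    · calc U' * E' * (E * U) = U' * (E' * E * U) := by rw [Matrix.mul_assoc, Matrix.mul_assoc]
        _ = U' * U := by rw [hE'E, Matrix.one_mul]
        _ = 1 := hU'U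
    · intro i hi
      rw [← Matrix.mulVec_mulVec, elem2_mulVec hi₀a]
      rcases Finset.mem_insert.mp hi with h | h
      · subst h
        simp [Ne.symm hi₀a, hz]
      · have h1 : i ≠ i₀ := fun hh => hi₀S (hh ▸ h)
        have h2 : i ≠ a := fun hh => ha (hh ▸ h)
        simp [h1, h2, hU i h]

end KHAux


open Polynomial

namespace KHAux2

open Matrix

/-- Lift an `m×m` matrix to an `(m+1)×(m+1)` matrix with a `1` in the corner. -/
noncomputable def liftMat {m : ℕ} (W : Matrix (Fin m) (Fin m) (Polynomial ℝ)) :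
    Matrix (Fin (m+1)) (Fin (m+1)) (Polynomial ℝ) :=
  Matrix.of fun i j =>
    Fin.cases (Fin.cases 1 (fun _ => 0) j) (fun i' => Fin.cases 0 (fun j' => W i' j') j) i

@[simp] lemma liftM_zero_zero {m : ℕ} (W : Matrix (Fin m) (Fin m) (Polynomial ℝ)) :
    liftMat W 0 0 = 1 := rfl

@[simp] lemma liftM_zero_succ {m : ℕ} (W : Matrix (Fin m) (Fin m) (Polynomial ℝ)) (j : Fin m) :
    liftMat W 0 j.succ = 0 := rfl

@[simp] lemma liftM_succ_zero {m : ℕ} (W : Matrix (Fin m) (Fin m) (Polynomial ℝ)) (i : Fin m) :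
    liftMat W i.succ 0 = 0 := rfl

@[simp] lemma liftM_succ_succ {m : ℕ} (W : Matrix (Fin m) (Fin m) (Polynomial ℝ)) (i j : Fin m) :
    liftMat W i.succ j.succ = W i j := rfl

lemma liftM_mul_zero_row {m : ℕ} (W : Matrix (Fin m) (Fin m) (Polynomial ℝ))
    (M : Matrix (Fin (m+1)) (Fin (m+1)) (Polynomial ℝ)) (j : Fin (m+1)) :
    (liftMat W * M) 0 j = M 0 j := by
  rw [Matrix.mul_apply, Fin.sum_univ_succ]
  simp

lemma liftM_mul_succ_row {m : ℕ} (W : Matrix (Fin m) (Fin m) (Polynomial ℝ))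
    (M : Matrix (Fin (m+1)) (Fin (m+1)) (Polynomial ℝ)) (i : Fin m) (j : Fin (m+1)) :
    (liftMat W * M) i.succ j = ∑ k, W i k * M k.succ j := by
  rw [Matrix.mul_apply, Fin.sum_univ_succ]
  simp

lemma liftM_mul_liftM {m : ℕ} (A B : Matrix (Fin m) (Fin m) (Polynomial ℝ)) :
    liftMat A * liftMat B = liftMat (A * B) := by
  ext i j
  refine Fin.cases ?_ (fun i' => ?_) i
  · rw [liftM_mul_zero_row]
    refine Fin.cases ?_ (fun j' => ?_) j <;> simp
  · rw [liftM_mul_succ_row]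
    refine Fin.cases ?_ (fun j' => ?_) j
    · simp
    · simp [Matrix.mul_apply]

lemma liftM_one {m : ℕ} : liftMat (1 : Matrix (Fin m) (Fin m) (Polynomial ℝ)) = 1 := by
  ext i j
  refine Fin.cases ?_ (fun i' => ?_) i <;> refine Fin.cases ?_ (fun j' => ?_) j <;>
    simp [Matrix.one_apply, Fin.succ_ne_zero, (Fin.succ_ne_zero _).symm, Fin.succ_inj]

lemma reduce_row (m : ℕ) (M : Matrix (Fin (m+1)) (Fin (m+1)) (Polynomial ℝ))
    (htri : ∀ i j, j < i → M i j = 0) (hmon : ∀ j : Fin m, (M j.succ j.succ).Monic) (k : ℕ) :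
    ∃ T T' : Matrix (Fin (m+1)) (Fin (m+1)) (Polynomial ℝ), T * T' = 1 ∧ T' * T = 1 ∧
      (∀ i j, i ≠ 0 → (T * M) i j = M i j) ∧ ((T * M) 0 0 = M 0 0) ∧
      (∀ j : Fin m, (j : ℕ) < k → ((T * M) 0 j.succ).degree < (M j.succ j.succ).degree) := by
  induction k with
  | zero =>
    exact ⟨1, 1, by simp, by simp, by simp, by simp, fun j hj => absurd hj (Nat.not_lt_zero _)⟩
  | succ k IH =>
    obtain ⟨T, T', h1, h2, hrow, h00, hdeg⟩ := IH
    by_cases hk : k < m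
    · set c : Fin m := ⟨k, hk⟩ with hc
      have hc0 : c.succ ≠ (0 : Fin (m+1)) := Fin.succ_ne_zero c
      set d := M c.succ c.succ with hd
      set q := (T * M) 0 c.succ /ₘ d with hq
      set Tr := Matrix.transvection (0 : Fin (m+1)) c.succ (-q) with hTr
      set Tr' := Matrix.transvection (0 : Fin (m+1)) c.succ q with hTr'
      have hTrTr' : Tr * Tr' = 1 := by
        rw [hTr, hTr', Matrix.transvection_mul_transvection_same _ _ (Ne.symm hc0), neg_add_cancel]
        simp [Matrix.transvection]
      have hTr'Tr : Tr' * Tr = 1 := by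
        rw [hTr, hTr', Matrix.transvection_mul_transvection_same _ _ (Ne.symm hc0), add_neg_cancel]
        simp [Matrix.transvection]
      have hrw : ∀ j, (Tr * T * M) 0 j = (T * M) 0 j + (-q) * (T * M) c.succ j := by
        intro j
        rw [Matrix.mul_assoc, hTr, Matrix.transvection_mul_apply_same]
      refine ⟨Tr * T, T' * Tr', ?_, ?_, ?_, ?_, ?_⟩
      · calc Tr * T * (T' * Tr') = Tr * (T * T' * Tr') := by rw [Matrix.mul_assoc, Matrix.mul_assoc]
          _ = Tr * Tr' := by rw [h1, Matrix.one_mul]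
          _ = 1 := hTrTr'
      · calc T' * Tr' * (Tr * T) = T' * (Tr' * Tr * T) := by rw [Matrix.mul_assoc, Matrix.mul_assoc]
          _ = T' * T := by rw [hTr'Tr, Matrix.one_mul]
          _ = 1 := h2
      · intro i j hi
        rw [Matrix.mul_assoc, hTr, Matrix.transvection_mul_apply_of_ne _ _ _ _ hi]
        exact hrow i j hi
      · rw [hrw 0, h00, hrow _ _ hc0, htri _ _ (Fin.succ_pos c), mul_zero, add_zero]
      · intro j hj
        rcases Nat.lt_succ_iff_lt_or_eq.mp hj with hj' | hj'
        · rw [hrw j.succ, hrow _ _ hc0, htri c.succ j.succ (Fin.succ_lt_succ_iff.mpr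
            (by rw [Fin.lt_def]; exact hj')), mul_zero, add_zero]
          exact hdeg j hj'
        · obtain rfl : c = j := Fin.ext hj'.symm
          rw [hrw c.succ, hrow _ _ hc0]
          have heq : (T * M) 0 c.succ + -q * M c.succ c.succ = (T * M) 0 c.succ %ₘ d := by
            rw [modByMonic_eq_sub_mul_div _ _, hq, hd]
            ring
          rw [heq]
          exact degree_modByMonic_lt _ (hmon c)
    · exact ⟨T, T', h1, h2, hrow, h00, fun j hj => hdeg j (by omega)⟩

end KHAux2


open Polynomial Matrix KHAux KHAux2

namespace KHAux3

theorem hermite : ∀ (m : ℕ) (D : Matrix (Fin m) (Fin m) (Polynomial ℝ)), D.det ≠ 0 →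
    ∃ U V : Matrix (Fin m) (Fin m) (Polynomial ℝ), U * V = 1 ∧ V * U = 1 ∧
      (∀ i j, j < i → (U * D) i j = 0) ∧
      (∀ j, ((U * D) j j).Monic) ∧
      (∀ i j, i ≠ j → ((U * D) i j).degree < ((U * D) j j).degree) := by
  intro m
  induction m with
  | zero =>
    intro D _
    exact ⟨1, 1, by simp, by simp, fun i => i.elim0, fun j => j.elim0, fun i => i.elim0⟩
  | succ m IH =>
    intro D hdet
    obtain ⟨U₁, V₁, h11, h12, hcol⟩ :=
      clear_col (fun i => D i 0) 0 (Finset.univ.erase 0) (Finset.notMem_erase _ _)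
    set M₁ := U₁ * D with hM₁
    have hcol0 : ∀ i : Fin (m+1), i ≠ 0 → M₁ i 0 = 0 := by
      intro i hi
      have := hcol i (Finset.mem_erase.2 ⟨hi, Finset.mem_univ i⟩)
      simpa [Matrix.mulVec, dotProduct, hM₁, Matrix.mul_apply] using this
    have hdetU₁ : U₁.det * V₁.det = 1 := by rw [← Matrix.det_mul, h11, Matrix.det_one]
    have hdet1 : M₁.det ≠ 0 := by
      rw [hM₁, Matrix.det_mul]
      exact mul_ne_zero (left_ne_zero_of_mul_eq_one hdetU₁) hdet
    have hg : M₁ 0 0 ≠ 0 := by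
      intro h
      refine hdet1 (Matrix.det_eq_zero_of_column_eq_zero 0 (fun i => ?_))
      rcases eq_or_ne i 0 with rfl | hi
      · exact h
      · exact hcol0 i hi
    have hlc : (M₁ 0 0).leadingCoeff ≠ 0 := leadingCoeff_ne_zero.mpr hg
    set c : ℝ := (M₁ 0 0).leadingCoeff⁻¹ with hcdef
    have hc0 : c ≠ 0 := inv_ne_zero hlc
    set dv : Fin (m+1) → Polynomial ℝ := Function.update (fun _ => 1) 0 (C c) with hdv
    set dv' : Fin (m+1) → Polynomial ℝ := Function.update (fun _ => 1) 0 (C c⁻¹) with hdv'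
    set U₂ := Matrix.diagonal dv with hU₂
    set V₂ := Matrix.diagonal dv' with hV₂
    have hdvmul : ∀ i, dv i * dv' i = 1 := by
      intro i
      by_cases hi : i = 0
      · subst hi
        simp [hdv, hdv', ← C_mul, mul_inv_cancel₀ hc0]
      · simp [hdv, hdv', Function.update_of_ne hi]
    have hdvmul' : ∀ i, dv' i * dv i = 1 := fun i => by rw [mul_comm]; exact hdvmul i
    have h21 : U₂ * V₂ = 1 := by
      rw [hU₂, hV₂, Matrix.diagonal_mul_diagonal, funext hdvmul, Matrix.diagonal_one]
    have h22 : V₂ * U₂ = 1 := by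
      rw [hU₂, hV₂, Matrix.diagonal_mul_diagonal, funext hdvmul', Matrix.diagonal_one]
    set M₂ := U₂ * M₁ with hM₂
    have hM₂app : ∀ i j, M₂ i j = dv i * M₁ i j := by
      intro i j
      rw [hM₂, hU₂, Matrix.diagonal_mul]
    have hM₂00 : M₂ 0 0 = C c * M₁ 0 0 := by rw [hM₂app]; simp [hdv]
    have hmon2 : (M₂ 0 0).Monic := by
      rw [Monic, hM₂00, leadingCoeff_mul, leadingCoeff_C, hcdef, inv_mul_cancel₀ hlc]
    have hM₂col : ∀ i : Fin (m+1), i ≠ 0 → M₂ i 0 = 0 := by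
      intro i hi
      rw [hM₂app, hcol0 i hi, mul_zero]
    have hdet2 : M₂.det ≠ 0 := by
      rw [hM₂, Matrix.det_mul]
      refine mul_ne_zero (left_ne_zero_of_mul_eq_one (a := U₂.det) (b := V₂.det) ?_) hdet1
      rw [← Matrix.det_mul, h21, Matrix.det_one]
    set E : Matrix (Fin m) (Fin m) (Polynomial ℝ) := M₂.submatrix Fin.succ Fin.succ with hE
    have hdetfact : M₂.det = M₂ 0 0 * E.det := by
      rw [Matrix.det_succ_column_zero]
      rw [Finset.sum_eq_single 0]
      · simp [Fin.succAbove_zero, hE]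
      · intro i _ hi
        rw [hM₂col i hi]
        ring
      · intro h
        exact absurd (Finset.mem_univ _) h
    have hdetE : E.det ≠ 0 := by
      intro h
      rw [hdetfact, h, mul_zero] at hdet2
      exact hdet2 rfl
    obtain ⟨W, W', hW1, hW2, htriE, hmonE, hdegE⟩ := IH E hdetE
    set N := W * E with hN
    set M₃ := liftMat W * M₂ with hM₃
    have hrow0 : ∀ j, M₃ 0 j = M₂ 0 j := fun j => liftM_mul_zero_row W M₂ j
    have hsuccsucc : ∀ (i j : Fin m), M₃ i.succ j.succ = N i j := by
      intro i j
      rw [hM₃, liftM_mul_succ_row, hN, Matrix.mul_apply]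
      rfl
    have hsucc0 : ∀ i : Fin m, M₃ i.succ 0 = 0 := by
      intro i
      rw [hM₃, liftM_mul_succ_row]
      refine Finset.sum_eq_zero (fun k _ => ?_)
      rw [hM₂col k.succ (Fin.succ_ne_zero k), mul_zero]
    have htri₃ : ∀ i j, j < i → M₃ i j = 0 := by
      intro i j hlt
      refine Fin.cases (fun hlt => absurd hlt (Fin.not_lt_zero _)) (fun i' hlt => ?_) i hlt
      refine Fin.cases (fun _ => hsucc0 i') (fun j' hlt => ?_) j hlt
      rw [hsuccsucc]
      exact htriE i' j' (Fin.succ_lt_succ_iff.mp hlt)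
    have hmon₃ : ∀ j, (M₃ j j).Monic := by
      intro j
      refine Fin.cases ?_ (fun j' => ?_) j
      · rw [hrow0]; exact hmon2
      · rw [hsuccsucc]; exact hmonE j'
    obtain ⟨T, T', hT1, hT2, hTrow, hT00, hTdeg⟩ :=
      reduce_row m M₃ htri₃ (fun j => hmon₃ j.succ) m
    have hUD : T * (liftMat W * (U₂ * U₁)) * D = T * M₃ := by
      rw [hM₃, hM₂, hM₁]
      simp only [Matrix.mul_assoc]
    refine ⟨T * (liftMat W * (U₂ * U₁)), V₁ * (V₂ * (liftMat W' * T')), ?_, ?_, ?_, ?_, ?_⟩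
    · calc T * (liftMat W * (U₂ * U₁)) * (V₁ * (V₂ * (liftMat W' * T')))
          = T * (liftMat W * (U₂ * (U₁ * V₁) * (V₂ * (liftMat W' * T')))) := by
            simp only [Matrix.mul_assoc]
        _ = T * (liftMat W * (U₂ * V₂ * (liftMat W' * T'))) := by
            rw [h11]; simp only [Matrix.one_mul, Matrix.mul_assoc]
        _ = T * (liftMat W * (liftMat W' * T')) := by rw [h21, Matrix.one_mul]
        _ = T * (liftMat (W * W') * T') := by rw [← Matrix.mul_assoc (liftMat W), liftM_mul_liftM]
        _ = T * T' := by rw [hW1, liftM_one, Matrix.one_mul]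
        _ = 1 := hT1
    · calc V₁ * (V₂ * (liftMat W' * T')) * (T * (liftMat W * (U₂ * U₁)))
          = V₁ * (V₂ * (liftMat W' * (T' * T) * (liftMat W * (U₂ * U₁)))) := by
            simp only [Matrix.mul_assoc]
        _ = V₁ * (V₂ * (liftMat W' * (liftMat W * (U₂ * U₁)))) := by
            rw [hT2]; simp only [Matrix.one_mul, Matrix.mul_assoc]
        _ = V₁ * (V₂ * (liftMat (W' * W) * (U₂ * U₁))) := by
            rw [← Matrix.mul_assoc (liftMat W'), liftM_mul_liftM]
        _ = V₁ * (V₂ * (U₂ * U₁)) := by rw [hW2, liftM_one, Matrix.one_mul]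
        _ = V₁ * U₁ := by rw [← Matrix.mul_assoc V₂, h22, Matrix.one_mul]
        _ = 1 := h12
    · -- triangular
      intro i j hlt
      rw [hUD]
      have hi0 : i ≠ 0 := fun h => absurd (h ▸ hlt) (Fin.not_lt_zero _)
      rw [hTrow i j hi0]
      exact htri₃ i j hlt
    · -- monic diagonal
      intro j
      rw [hUD]
      refine Fin.cases ?_ (fun j' => ?_) j
      · rw [hT00]; exact hmon₃ 0
      · rw [hTrow _ _ (Fin.succ_ne_zero j')]; exact hmon₃ j'.succ
    · -- degrees
      intro i j hij
      rw [hUD]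
      refine Fin.cases ?_ (fun j' => ?_) j hij
      all_goals intro hij
      · have hi0 : i ≠ 0 := hij
        rw [hTrow i 0 hi0, hT00]
        have h0 : M₃ i 0 = 0 := htri₃ i 0 (Fin.pos_of_ne_zero hi0)
        rw [h0, degree_zero]
        exact bot_lt_iff_ne_bot.mpr (degree_eq_bot.not.mpr (hmon₃ 0).ne_zero)
      · have hdiag : (T * M₃) j'.succ j'.succ = M₃ j'.succ j'.succ :=
          hTrow _ _ (Fin.succ_ne_zero j')
        rw [hdiag]
        refine Fin.cases ?_ (fun i' => ?_) i hij
        all_goals intro hij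
        · exact hTdeg j' j'.isLt
        · rw [hTrow _ _ (Fin.succ_ne_zero i'), hsuccsucc, hsuccsucc]
          have hne : i' ≠ j' := fun h => hij (h ▸ rfl)
          exact hdegE i' j' hne

end KHAux3

open Polynomial Matrix

namespace KHMain

theorem main {L K : ℕ}
    (R : Matrix (Fin (L + K)) (Fin (L + K)) (Polynomial ℝ)) (hdet : R.det ≠ 0)
    (hL : ∀ J : Finset (Fin (L + K)), J.card = L →
      ∃ G : Matrix {x // x ∈ J} (Fin (L+K)) (Polynomial ℝ),
        G * (R.submatrix id (fun j : {x // x ∈ J} => (j : Fin (L+K)))) = 1) :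
    ∃ U : Matrix (Fin (L + K)) (Fin (L + K)) (Polynomial ℝ),
      (∃ V : Matrix (Fin (L + K)) (Fin (L + K)) (Polynomial ℝ), U * V = 1 ∧ V * U = 1) ∧
      (∀ i j : Fin L, (U * R) (Fin.castAdd K i) (Fin.castAdd K j) = if i = j then 1 else 0) ∧
      (∀ (i : Fin K) (j : Fin L), (U * R) (Fin.natAdd L i) (Fin.castAdd K j) = 0) ∧
      (∀ i j : Fin K, j < i → (U * R) (Fin.natAdd L i) (Fin.natAdd L j) = 0) ∧
      (∀ i : Fin K, ∀ k : Fin (L + K), k ≠ Fin.natAdd L i →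
        ((U * R) k (Fin.natAdd L i)).degree <
          ((U * R) (Fin.natAdd L i) (Fin.natAdd L i)).degree) := by
  obtain ⟨U, V, hUV, hVU, htri, hmon, hdeg⟩ := KHAux3.hermite (L + K) R hdet
  set M := U * R with hM
  have hinj : Function.Injective (Fin.castAdd (n := L) K) := fun a b h => by
    apply Fin.ext
    have := congrArg Fin.val h
    simpa using this
  set J : Finset (Fin (L + K)) := Finset.univ.map ⟨Fin.castAdd K, hinj⟩ with hJ
  have hcard : J.card = L := by simp [hJ]
  obtain ⟨G, hG⟩ := hL J hcard
  have hmemJ : ∀ i : Fin L, Fin.castAdd K i ∈ J := fun i => by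
    rw [hJ]
    exact Finset.mem_map_of_mem _ (Finset.mem_univ i)
  set e : Fin L → {x // x ∈ J} := fun i => ⟨Fin.castAdd K i, hmemJ i⟩ with he
  have heinj : Function.Injective e := fun a b h => hinj (congrArg Subtype.val h)
  have hcs : M.submatrix id (fun j : {x // x ∈ J} => (j : Fin (L+K))) =
      U * (R.submatrix id (fun j : {x // x ∈ J} => (j : Fin (L+K)))) := by
    ext i j
    simp [Matrix.mul_apply, Matrix.submatrix, hM]
  have hGM : (G * V) * (M.submatrix id (fun j : {x // x ∈ J} => (j : Fin (L+K)))) = 1 := by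
    rw [hcs]
    have hassoc : G * V * (U * (R.submatrix id (fun j : {x // x ∈ J} => (j : Fin (L+K))))) =
        G * (V * U * (R.submatrix id (fun j : {x // x ∈ J} => (j : Fin (L+K))))) := by
      simp only [Matrix.mul_assoc]
    rw [hassoc, hVU, Matrix.one_mul]
    exact hG
  have hcastlt : ∀ (i : Fin L) (j : Fin K), (Fin.castAdd K i) < (Fin.natAdd L j) := by
    intro i j
    rw [Fin.lt_def]
    simp only [Fin.coe_castAdd, Fin.coe_natAdd]
    omega
  set T : Matrix (Fin L) (Fin L) (Polynomial ℝ) :=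
    Matrix.of (fun i j => M (Fin.castAdd K i) (Fin.castAdd K j)) with hT
  set G'' : Matrix (Fin L) (Fin L) (Polynomial ℝ) :=
    Matrix.of (fun j i => (G * V) (e j) (Fin.castAdd K i)) with hG''
  have hG''T : G'' * T = 1 := by
    ext j j'
    have h1 := congrFun (congrFun hGM (e j)) (e j')
    rw [Matrix.mul_apply] at h1
    simp only [Matrix.submatrix_apply, id_eq] at h1
    rw [Fin.sum_univ_add] at h1
    have h2 : (∑ i : Fin K, (G * V) (e j) (Fin.natAdd L i) *
        M (Fin.natAdd L i) ((e j' : Fin (L+K)))) = 0 := by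
      refine Finset.sum_eq_zero (fun i _ => ?_)
      have : M (Fin.natAdd L i) ((e j' : Fin (L+K))) = 0 := htri _ _ (hcastlt j' i)
      rw [this, mul_zero]
    rw [h2, add_zero] at h1
    rw [Matrix.mul_apply]
    have h3 : (∑ i : Fin L, G'' j i * T i j') =
        ∑ i : Fin L, (G * V) (e j) (Fin.castAdd K i) * M (Fin.castAdd K i) ((e j' : Fin (L+K))) :=
      rfl
    rw [h3, h1, Matrix.one_apply, Matrix.one_apply]
    by_cases hjj : j = j'
    · simp [hjj]
    · rw [if_neg hjj, if_neg (fun h => hjj (heinj h))]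
  have hunitT : IsUnit T.det := by
    have h4 : G''.det * T.det = 1 := by rw [← Matrix.det_mul, hG''T, Matrix.det_one]
    exact IsUnit.of_mul_eq_one _ (by rw [mul_comm]; exact h4)
  have htriT : T.BlockTriangular id := by
    intro i j hlt
    refine htri _ _ ?_
    rw [Fin.lt_def]
    simpa using hlt
  have hdiag1 : ∀ i : Fin L, M (Fin.castAdd K i) (Fin.castAdd K i) = 1 := by
    intro i
    have hu : IsUnit (T i i) := by
      rw [Matrix.det_of_upperTriangular htriT] at hunitT
      rw [← Finset.mul_prod_erase _ _ (Finset.mem_univ i)] at hunitT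
      exact isUnit_of_mul_isUnit_left hunitT
    obtain ⟨r, hr, hrp⟩ := Polynomial.isUnit_iff.mp hu
    have hmT : (T i i).Monic := hmon (Fin.castAdd K i)
    rw [← hrp] at hmT
    have hr1 : r = 1 := by
      have := hmT.leadingCoeff
      rwa [leadingCoeff_C] at this
    have : T i i = 1 := by rw [← hrp, hr1, Polynomial.C_1]
    exact this
  have hzerocol : ∀ (j : Fin L) (k : Fin (L+K)), k ≠ Fin.castAdd K j →
      M k (Fin.castAdd K j) = 0 := by
    intro j k hk
    have hlt := hdeg k _ hk
    rw [hdiag1 j, degree_one] at hlt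
    exact degree_eq_bot.mp (Nat.WithBot.lt_zero_iff.mp hlt)
  refine ⟨U, ⟨V, hUV, hVU⟩, ?_, ?_, ?_, ?_⟩
  · intro i j
    by_cases hij : i = j
    · rw [if_pos hij, hij]
      exact hdiag1 j
    · rw [if_neg hij]
      exact hzerocol j _ (fun h => hij (hinj h))
  · intro i j
    refine hzerocol j _ (fun h => ?_)
    have := congrArg Fin.val h
    simp only [Fin.coe_natAdd, Fin.coe_castAdd] at this
    omega
  · intro i j hlt
    refine htri _ _ ?_
    rw [Fin.lt_def]
    simp only [Fin.coe_natAdd]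
    omega
  · intro i k hk
    exact hdeg k _ hk

end KHMain

end KroneckerHermiteAux

/-- Kronecker-Hermite canonical kernel representation, general
case (matrix size `L + K`, so that `L` columns carry the identity block). -/
theorem kronecker_hermite_general {L K : ℕ}
    (R : Matrix (Fin (L + K)) (Fin (L + K)) (Polynomial ℝ)) (hdet : R.det ≠ 0)
    (hL : ∀ J : Finset (Fin (L + K)), J.card = L → LeftUnimodular (colSub R J))
    (hLmax : ¬ ∀ J : Finset (Fin (L + K)), J.card = L + 1 → LeftUnimodular (colSub R J)) :
    ∃ U : Matrix (Fin (L + K)) (Fin (L + K)) (Polynomial ℝ),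
      (∃ V : Matrix (Fin (L + K)) (Fin (L + K)) (Polynomial ℝ), U * V = 1 ∧ V * U = 1) ∧
      (∀ i j : Fin L, (U * R) (Fin.castAdd K i) (Fin.castAdd K j) = if i = j then 1 else 0) ∧
      (∀ (i : Fin K) (j : Fin L), (U * R) (Fin.natAdd L i) (Fin.castAdd K j) = 0) ∧
      (∀ i j : Fin K, j < i → (U * R) (Fin.natAdd L i) (Fin.natAdd L j) = 0) ∧
      (∀ i : Fin K, ∀ k : Fin (L + K), k ≠ Fin.natAdd L i →
        ((U * R) k (Fin.natAdd L i)).degree <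
          ((U * R) (Fin.natAdd L i) (Fin.natAdd L i)).degree) := by
  exact KHMain.main R hdet (fun J hJ => hL J hJ)
end
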